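/- arXiv:1410.4406 — 4 statements merged into one kernel-verified Lean document; each statement's English description precedes it below -/
import Mathlib

section
/- Let F_H be an affine and linear invariant family of normalized sense-preserving harmonic mappings on 𝔻. Suppose there exists f_0 = h_0 + conj(g_0) ∈ F_H^0 such that for every f = h + conj(g) ∈ F_H^0 one has Re(a_2(h)) ≤ a_2(h_0) and Re(b_2(g)) ≤ b_2(g_0) (with a_2(h_0), b_2(g_0) real). Then a_2(h_0) > 1/2. -/
open Complex Set

noncomputable section

/-- The open unit disk in the complex plane. -/
def unitDisk : Set ℂ := {z : ℂ | ‖z‖ < 1}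

/-- The generalized Koebe function `k_a`, using the principal branch of the logarithm
(via the complex power function). -/
def koebeFn (a : ℂ) (z : ℂ) : ℂ :=
  if a = 0 then (1 / 2) * Complex.log ((1 + z) / (1 - z))
  else (1 / (2 * a)) * (((1 + z) / (1 - z)) ^ a - 1)

/-- The lens map `l_R` (with principal-branch powers); note that this formula also
gives `l_0 ≡ 0` and `l_1 = id` on the unit disk. -/
def lensMap (R : ℝ) (z : ℂ) : ℂ :=
  (((1 + z) / (1 - z)) ^ (R : ℂ) - 1) / (((1 + z) / (1 - z)) ^ (R : ℂ) + 1)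

/-- The `n`-th Taylor coefficient of `f` at `0`. -/
def coeffAt (f : ℂ → ℂ) (n : ℕ) : ℂ := iteratedDeriv n f 0 / n.factorial

/-- A normalized sense-preserving harmonic mapping `f = h + conj g` on the unit disk,
recorded via its analytic part `h` and co-analytic part `g`. -/
structure IsNormalizedSPH (h g : ℂ → ℂ) : Prop where
  h_analytic : DifferentiableOn ℂ h unitDisk
  g_analytic : DifferentiableOn ℂ g unitDisk
  h_zero : h 0 = 0
  g_zero : g 0 = 0
  dh_zero : deriv h 0 = 1
  dh_ne : ∀ z ∈ unitDisk, deriv h z ≠ 0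
  sense_preserving : ∀ z ∈ unitDisk, ‖deriv g z‖ < ‖deriv h z‖

/-- An affine and linear invariant family of normalized sense-preserving harmonic
mappings `f = h + conj g` on the unit disk, each member recorded as the pair `(h, g)`:
the family is closed under Koebe transforms, affine changes and rotations
(each written out in terms of the canonical decomposition). -/
structure IsAffineLinearInvariantFamily (F : Set ((ℂ → ℂ) × (ℂ → ℂ))) : Prop where
  nsph : ∀ p ∈ F, IsNormalizedSPH p.1 p.2
  koebe_mem : ∀ p ∈ F, ∀ ζ ∈ unitDisk,
    ((fun z => (p.1 ((z + ζ) / (1 + (starRingEnd ℂ) ζ * z)) - p.1 ζ) /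
        ((1 - ((‖ζ‖ : ℝ) : ℂ) ^ 2) * deriv p.1 ζ)),
     (fun z => (p.2 ((z + ζ) / (1 + (starRingEnd ℂ) ζ * z)) - p.2 ζ) /
        ((1 - ((‖ζ‖ : ℝ) : ℂ) ^ 2) * (starRingEnd ℂ) (deriv p.1 ζ)))) ∈ F
  affine_mem : ∀ p ∈ F, ∀ ε ∈ unitDisk,
    ((fun z => (p.1 z - (starRingEnd ℂ) ε * p.2 z) / (1 - (starRingEnd ℂ) ε * deriv p.2 0)),
     (fun z => (p.2 z - ε * p.1 z) /
        (starRingEnd ℂ) (1 - (starRingEnd ℂ) ε * deriv p.2 0))) ∈ F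
  rot_mem : ∀ p ∈ F, ∀ lam : ℂ, ‖lam‖ = 1 →
    ((fun z => (starRingEnd ℂ) lam * p.1 (lam * z)),
     (fun z => lam * p.2 (lam * z))) ∈ F

/-! ### Auxiliary lemmas -/

lemma ud_eq : unitDisk = Metric.ball (0:ℂ) 1 := by
  ext z; simp [unitDisk, Metric.mem_ball, Complex.dist_eq]

lemma ud_open : IsOpen unitDisk := by rw [ud_eq]; exact Metric.isOpen_ball

lemma mem_ud {z : ℂ} : z ∈ unitDisk ↔ ‖z‖ < 1 := Iff.rfl

lemma zero_mem_ud : (0:ℂ) ∈ unitDisk := by simp [mem_ud]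

lemma ofReal_mem_ud {r : ℝ} (h0 : 0 ≤ r) (h1 : r < 1) : ((r:ℂ)) ∈ unitDisk := by
  simp [mem_ud, Complex.norm_real, _root_.abs_of_nonneg h0, h1]

lemma coeffAt_two (f : ℂ → ℂ) : coeffAt f 2 = deriv (deriv f) 0 / 2 := by
  have : iteratedDeriv 2 f = deriv (deriv f) := by
    rw [show (2:ℕ) = 0 + 1 + 1 by rfl, iteratedDeriv_succ, iteratedDeriv_succ, iteratedDeriv_zero]
  rw [coeffAt, this]
  norm_num

/-- Koebe-type transform component. -/
def Kt (f : ℂ → ℂ) (r : ℝ) (c : ℂ) : ℂ → ℂ :=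
  fun z => (f ((z + (r:ℂ)) / (1 + (r:ℂ) * z)) - f (r:ℂ)) / c

/-- Affine-type transform component. -/
def At (P Q : ℂ → ℂ) (e d : ℂ) : ℂ → ℂ := fun z => (P z - e * Q z) / d

/-- Rotation-type transform component. -/
def Rt (f : ℂ → ℂ) (μ lam : ℂ) : ℂ → ℂ := fun z => μ * f (lam * z)

lemma mobius_ne {r : ℝ} (h0 : 0 ≤ r) (h1 : r < 1) {z : ℂ} (hz : ‖z‖ < 1) :
    (1 : ℂ) + (r:ℂ) * z ≠ 0 := by
  intro h
  have h2 : (r:ℂ) * z = -1 := by linear_combination h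
  have h3 : ‖(r:ℂ) * z‖ = 1 := by rw [h2]; simp
  rw [norm_mul, Complex.norm_real, Real.norm_eq_abs, _root_.abs_of_nonneg h0] at h3
  nlinarith [norm_nonneg z]

lemma mobius_mem {r : ℝ} (h0 : 0 ≤ r) (h1 : r < 1) {z : ℂ} (hz : ‖z‖ < 1) :
    (z + (r:ℂ)) / (1 + (r:ℂ) * z) ∈ unitDisk := by
  have hne := mobius_ne h0 h1 hz
  rw [mem_ud, norm_div, div_lt_one (norm_pos_iff.mpr hne)]
  have hsq : Complex.normSq (z + (r:ℂ)) < Complex.normSq (1 + (r:ℂ) * z) := by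
    have hz2 : Complex.normSq z < 1 := by
      rw [Complex.normSq_eq_norm_sq]; nlinarith [norm_nonneg z]
    simp only [Complex.normSq_apply, Complex.add_re, Complex.add_im, Complex.mul_re,
      Complex.mul_im, Complex.ofReal_re, Complex.ofReal_im, Complex.one_re, Complex.one_im,
      Complex.normSq_apply] at hz2 ⊢
    nlinarith [mul_pos (by nlinarith : (0:ℝ) < 1 - r^2)
      (by nlinarith : (0:ℝ) < 1 - (z.re*z.re + z.im*z.im))]
  rw [Complex.norm_def, Complex.norm_def]
  exact Real.sqrt_lt_sqrt (Complex.normSq_nonneg _) hsq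

lemma hasDerivAt_mobius (r : ℝ) {z : ℂ} (hne : (1:ℂ) + (r:ℂ) * z ≠ 0) :
    HasDerivAt (fun w : ℂ => (w + (r:ℂ)) / (1 + (r:ℂ) * w))
      ((1 - (r:ℂ)^2) / (1 + (r:ℂ) * z)^2) z := by
  have h1 : HasDerivAt (fun w : ℂ => w + (r:ℂ)) 1 z := (hasDerivAt_id z).add_const _
  have h2 : HasDerivAt (fun w : ℂ => (1:ℂ) + (r:ℂ) * w) (r:ℂ) z := by
    simpa using ((hasDerivAt_id z).const_mul (r:ℂ)).const_add 1
  have h3 := h1.div h2 hne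
  refine h3.congr_deriv ?_
  field_simp
  ring

lemma rot_hasDerivAt {f : ℂ → ℂ} {x lam μ : ℂ} (hf : DifferentiableAt ℂ f (lam * x)) :
    HasDerivAt (Rt f μ lam) (μ * lam * deriv f (lam * x)) x := by
  unfold Rt
  have h1 : HasDerivAt (fun z : ℂ => lam * z) lam x := by
    simpa using (hasDerivAt_id x).const_mul lam
  have h2 := (hf.hasDerivAt.comp x h1).const_mul μ
  simp only [Function.comp] at h2
  refine h2.congr_deriv ?_
  ring

lemma rot_deriv2 {f : ℂ → ℂ} (hf : DifferentiableOn ℂ f unitDisk) {lam μ : ℂ}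
    (hl : ‖lam‖ = 1) :
    deriv (deriv (Rt f μ lam)) 0 = μ * lam^2 * deriv (deriv f) 0 := by
  have han := hf.analyticOnNhd ud_open
  have hmemmap : ∀ x : ℂ, x ∈ unitDisk → lam * x ∈ unitDisk := by
    intro x hx
    rw [mem_ud] at hx ⊢
    rw [norm_mul, hl, one_mul]; exact hx
  have hev : deriv (Rt f μ lam) =ᶠ[nhds 0]
      (fun x => μ * lam * deriv f (lam * x)) := by
    filter_upwards [ud_open.mem_nhds zero_mem_ud] with x hx
    exact (rot_hasDerivAt ((han _ (hmemmap x hx)).differentiableAt)).deriv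
  rw [hev.deriv_eq]
  have hdf : DifferentiableAt ℂ (deriv f) (lam * 0) := by
    rw [mul_zero]; exact ((han.deriv) 0 zero_mem_ud).differentiableAt
  have h2 : deriv (fun x => μ * lam * deriv f (lam * x)) 0 = μ * lam * lam * deriv (deriv f) (lam * 0) :=
    (rot_hasDerivAt (μ := μ * lam) (lam := lam) (f := deriv f) (x := 0) hdf).deriv
  rw [h2, mul_zero]
  ring

lemma rot_deriv0 {f : ℂ → ℂ} (hf : DifferentiableAt ℂ f 0) (lam μ : ℂ) :
    deriv (Rt f μ lam) 0 = μ * lam * deriv f 0 := by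
  have hdf : DifferentiableAt ℂ f (lam * 0) := by rw [mul_zero]; exact hf
  rw [(rot_hasDerivAt hdf).deriv, mul_zero]

lemma koebe_hasDerivAt {f : ℂ → ℂ} (hf : AnalyticOnNhd ℂ f unitDisk) {r : ℝ}
    (h0 : 0 ≤ r) (h1 : r < 1) (c : ℂ) {z : ℂ} (hz : ‖z‖ < 1) :
    HasDerivAt (Kt f r c)
      (deriv f ((z + (r:ℂ)) / (1 + (r:ℂ) * z)) * ((1 - (r:ℂ)^2) / (1 + (r:ℂ) * z)^2) / c)
      z := by
  unfold Kt
  have hne := mobius_ne h0 h1 hz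
  have hmem := mobius_mem h0 h1 hz
  have hd : HasDerivAt f (deriv f ((z + (r:ℂ)) / (1 + (r:ℂ) * z)))
      ((z + (r:ℂ)) / (1 + (r:ℂ) * z)) := ((hf _ hmem).differentiableAt).hasDerivAt
  have hphi := hasDerivAt_mobius r hne
  exact ((hd.comp z hphi).sub_const (f (r:ℂ))).div_const c

lemma koebe_deriv1 {f : ℂ → ℂ} (hf : AnalyticOnNhd ℂ f unitDisk) {r : ℝ}
    (h0 : 0 ≤ r) (h1 : r < 1) (c : ℂ) :
    deriv (Kt f r c) 0 = deriv f (r:ℂ) * (1 - (r:ℂ)^2) / c := by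
  have h := (koebe_hasDerivAt hf h0 h1 c (z := 0) (by simp)).deriv
  rw [h]
  norm_num

lemma koebe_deriv2 {f : ℂ → ℂ} (hf : AnalyticOnNhd ℂ f unitDisk) {r : ℝ}
    (h0 : 0 ≤ r) (h1 : r < 1) (c : ℂ) :
    deriv (deriv (Kt f r c)) 0
      = ((1 - (r:ℂ)^2)^2 * deriv (deriv f) (r:ℂ) - 2*(r:ℂ)*(1 - (r:ℂ)^2) * deriv f (r:ℂ)) / c := by
  have hrU : ((r:ℂ)) ∈ unitDisk := ofReal_mem_ud h0 h1
  have hev : deriv (Kt f r c)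
      =ᶠ[nhds 0] (fun z => deriv f ((z + (r:ℂ)) / (1 + (r:ℂ) * z)) *
        ((1 - (r:ℂ)^2) / (1 + (r:ℂ) * z)^2) / c) := by
    filter_upwards [ud_open.mem_nhds zero_mem_ud] with z hz
    exact (koebe_hasDerivAt hf h0 h1 c hz).deriv
  rw [hev.deriv_eq]
  have hne0 : (1:ℂ) + (r:ℂ) * 0 ≠ 0 := by simp
  have hd1 : HasDerivAt (fun z => deriv f ((z + (r:ℂ)) / (1 + (r:ℂ) * z)))
      (deriv (deriv f) (r:ℂ) * ((1 - (r:ℂ)^2) / (1 + (r:ℂ) * 0)^2)) 0 := by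
    have hdf : HasDerivAt (deriv f) (deriv (deriv f) (r:ℂ)) (((0:ℂ) + (r:ℂ)) / (1 + (r:ℂ) * 0)) := by
      have : ((0:ℂ) + (r:ℂ)) / (1 + (r:ℂ) * 0) = (r:ℂ) := by norm_num
      rw [this]
      exact ((hf.deriv) (r:ℂ) hrU).differentiableAt.hasDerivAt
    exact hdf.comp 0 (hasDerivAt_mobius r hne0)
  have hd2 : HasDerivAt (fun z : ℂ => (1 - (r:ℂ)^2) / (1 + (r:ℂ) * z)^2)
      (-(2*(r:ℂ)*(1 - (r:ℂ)^2))) 0 := by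
    have hden : HasDerivAt (fun z : ℂ => (1 + (r:ℂ) * z)^2) (2*(r:ℂ)) 0 := by
      have h2 : HasDerivAt (fun w : ℂ => (1:ℂ) + (r:ℂ) * w) (r:ℂ) 0 := by
        simpa using ((hasDerivAt_id (0:ℂ)).const_mul (r:ℂ)).const_add 1
      have h3 := h2.fun_pow 2
      refine h3.congr_deriv ?_
      norm_num
    have hne2 : ((1:ℂ) + (r:ℂ) * 0)^2 ≠ 0 := by simp
    have h4 := (hasDerivAt_const (0:ℂ) (1 - (r:ℂ)^2)).div hden hne2
    refine h4.congr_deriv ?_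
    norm_num
    ring
  have := ((hd1.fun_mul hd2).div_const c).deriv
  rw [this]
  norm_num
  ring

lemma affine_deriv1 {P Q : ℂ → ℂ} (hP : DifferentiableAt ℂ P 0) (hQ : DifferentiableAt ℂ Q 0)
    (e d : ℂ) :
    deriv (At P Q e d) 0 = (deriv P 0 - e * deriv Q 0) / d := by
  exact ((hP.hasDerivAt.sub (hQ.hasDerivAt.const_mul e)).div_const d).deriv

lemma affine_deriv2 {P Q : ℂ → ℂ} (hP : DifferentiableOn ℂ P unitDisk)
    (hQ : DifferentiableOn ℂ Q unitDisk) (e d : ℂ) :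
    deriv (deriv (At P Q e d)) 0
      = (deriv (deriv P) 0 - e * deriv (deriv Q) 0) / d := by
  have hPa := hP.analyticOnNhd ud_open
  have hQa := hQ.analyticOnNhd ud_open
  have hev : deriv (At P Q e d) =ᶠ[nhds 0]
      (fun z => (deriv P z - e * deriv Q z) / d) := by
    filter_upwards [ud_open.mem_nhds zero_mem_ud] with z hz
    exact (((hPa z hz).differentiableAt.hasDerivAt.sub
      ((hQa z hz).differentiableAt.hasDerivAt.const_mul e)).div_const d).deriv
  rw [hev.deriv_eq]
  exact ((((hPa.deriv) 0 zero_mem_ud).differentiableAt.hasDerivAt.sub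
    (((hQa.deriv) 0 zero_mem_ud).differentiableAt.hasDerivAt.const_mul e)).div_const d).deriv

lemma hasDerivAt_normSq_comp {w : ℂ → ℂ} {r : ℝ} {w' : ℂ} (hw : HasDerivAt w w' (r:ℂ)) :
    HasDerivAt (fun t : ℝ => Complex.normSq (w (t:ℂ)))
      (2 * ((starRingEnd ℂ) (w (r:ℂ)) * w').re) r := by
  have hwr : HasDerivAt (fun t : ℝ => w (t:ℂ)) w' r := hw.comp_ofReal
  have hre : HasDerivAt (fun t : ℝ => (w (t:ℂ)).re) w'.re r := by
    have := Complex.reCLM.hasFDerivAt.comp_hasDerivAt r hwr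
    exact this
  have him : HasDerivAt (fun t : ℝ => (w (t:ℂ)).im) w'.im r := by
    have := Complex.imCLM.hasFDerivAt.comp_hasDerivAt r hwr
    exact this
  have h := (hre.mul hre).add (him.mul him)
  have heq : (fun t : ℝ => Complex.normSq (w (t:ℂ)))
      = fun t : ℝ => (w (t:ℂ)).re * (w (t:ℂ)).re + (w (t:ℂ)).im * (w (t:ℂ)).im := by
    funext t; simp [Complex.normSq_apply]
  rw [heq]
  refine h.congr_deriv ?_
  simp [Complex.mul_re, Complex.conj_re, Complex.conj_im]
  ring

/-- The Jacobian-type quantity along the real axis. -/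
def Jf (h g : ℂ → ℂ) (r : ℝ) : ℝ :=
  (1 - r^2)^2 * (Complex.normSq (deriv h (r:ℂ)) - Complex.normSq (deriv g (r:ℂ)))

/-- Its derivative. -/
def JD (h g : ℂ → ℂ) (r : ℝ) : ℝ :=
  (-(2*(1 - r^2))*(2*r)) * (Complex.normSq (deriv h (r:ℂ)) - Complex.normSq (deriv g (r:ℂ)))
  + (1 - r^2)^2 * (2 * ((starRingEnd ℂ) (deriv h (r:ℂ)) * deriv (deriv h) (r:ℂ)).re
      - 2 * ((starRingEnd ℂ) (deriv g (r:ℂ)) * deriv (deriv g) (r:ℂ)).re)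

lemma core_identity {r aa : ℝ} {hp hpp gp gpp : ℂ}
    (hr0 : 0 ≤ r) (hr1 : r < 1) (hhp : hp ≠ 0)
    (huv : Complex.normSq gp < Complex.normSq hp)
    (hineq : -aa ≤ ((((1 - (r:ℂ)^2)^2 * hpp - 2*(r:ℂ)*(1 - (r:ℂ)^2) * hp) / ((1 - (r:ℂ)^2) * hp)
        - (starRingEnd ℂ) (gp / (starRingEnd ℂ) hp) *
          (((1 - (r:ℂ)^2)^2 * gpp - 2*(r:ℂ)*(1 - (r:ℂ)^2) * gp) / ((1 - (r:ℂ)^2) * (starRingEnd ℂ) hp)))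
        / (1 - (starRingEnd ℂ) (gp / (starRingEnd ℂ) hp) * (gp / (starRingEnd ℂ) hp)) / 2).re) :
    -(4*aa/(1 - r^2)) * ((1 - r^2)^2 * (Complex.normSq hp - Complex.normSq gp))
      ≤ (-(2*(1 - r^2))*(2*r)) * (Complex.normSq hp - Complex.normSq gp)
        + (1 - r^2)^2 * (2 * ((starRingEnd ℂ) hp * hpp).re - 2 * ((starRingEnd ℂ) gp * gpp).re) := by
  set u : ℝ := Complex.normSq hp with hu_def
  set v : ℝ := Complex.normSq gp with hv_def
  have hu_pos : 0 < u := Complex.normSq_pos.mpr hhp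
  have hv_nonneg : 0 ≤ v := Complex.normSq_nonneg _
  have huv' : 0 < u - v := by linarith
  have hchp : (starRingEnd ℂ) hp ≠ 0 := by simpa using hhp
  have hr2 : (0:ℝ) < 1 - r^2 := by nlinarith
  have hr2C : ((1:ℂ) - (r:ℂ)^2) ≠ 0 := by
    have : ((1:ℂ) - (r:ℂ)^2) = ((1 - r^2 : ℝ) : ℂ) := by push_cast; ring
    rw [this]
    exact_mod_cast hr2.ne'
  have e0 : hp * (starRingEnd ℂ) hp = (u:ℂ) := Complex.mul_conj hp
  have e0g : gp * (starRingEnd ℂ) gp = (v:ℂ) := Complex.mul_conj gp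
  have huC : ((u:ℂ)) ≠ 0 := by exact_mod_cast hu_pos.ne'
  have huvC : ((u:ℂ) - (v:ℂ)) ≠ 0 := by
    have : ((u:ℂ) - (v:ℂ)) = ((u - v : ℝ) : ℂ) := by push_cast; ring
    rw [this]; exact_mod_cast huv'.ne'
  -- denominator simplification
  have e1 : 1 - (starRingEnd ℂ) (gp / (starRingEnd ℂ) hp) * (gp / (starRingEnd ℂ) hp)
      = ((u:ℂ) - (v:ℂ)) / (u:ℂ) := by
    have e0g' : (starRingEnd ℂ) gp * gp = (v:ℂ) := by rw [mul_comm]; exact e0g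
    rw [map_div₀, Complex.conj_conj]
    field_simp
    linear_combination (v:ℂ) * e0 - (u:ℂ) * e0g'
  -- full simplification of the left-hand complex quantity
  have hEq : (((1 - (r:ℂ)^2)^2 * hpp - 2*(r:ℂ)*(1 - (r:ℂ)^2) * hp) / ((1 - (r:ℂ)^2) * hp)
        - (starRingEnd ℂ) (gp / (starRingEnd ℂ) hp) *
          (((1 - (r:ℂ)^2)^2 * gpp - 2*(r:ℂ)*(1 - (r:ℂ)^2) * gp) / ((1 - (r:ℂ)^2) * (starRingEnd ℂ) hp)))
        / (1 - (starRingEnd ℂ) (gp / (starRingEnd ℂ) hp) * (gp / (starRingEnd ℂ) hp)) / 2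
      = (((1 - (r:ℂ)^2)^2 * (hpp * (starRingEnd ℂ) hp) - 2*(r:ℂ)*(1 - (r:ℂ)^2) * (u:ℂ))
          - ((1 - (r:ℂ)^2)^2 * ((starRingEnd ℂ) gp * gpp) - 2*(r:ℂ)*(1 - (r:ℂ)^2) * (v:ℂ)))
        / (2 * (1 - (r:ℂ)^2) * ((u:ℂ) - (v:ℂ))) := by
    have hpc : hp * (starRingEnd ℂ) hp - gp * (starRingEnd ℂ) gp ≠ 0 := by
      rw [e0, e0g]; exact huvC
    have d1 : ((hp * (starRingEnd ℂ) hp - gp * (starRingEnd ℂ) gp) / (hp * (starRingEnd ℂ) hp)) * 2 ≠ 0 :=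
      mul_ne_zero (div_ne_zero hpc (by rw [e0]; exact huC)) two_ne_zero
    have d2 : 2 * ((1:ℂ) - (r:ℂ)^2) * (hp * (starRingEnd ℂ) hp - gp * (starRingEnd ℂ) gp) ≠ 0 :=
      mul_ne_zero (mul_ne_zero two_ne_zero hr2C) hpc
    rw [e1, map_div₀, Complex.conj_conj, ← e0, ← e0g, div_div, div_eq_div_iff d1 d2]
    field_simp
  rw [hEq] at hineq
  have hden_eq : (2 * ((1:ℂ) - (r:ℂ)^2) * ((u:ℂ) - (v:ℂ))) = ((2*(1-r^2)*(u-v) : ℝ) : ℂ) := by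
    push_cast; ring
  rw [hden_eq, Complex.div_ofReal_re] at hineq
  have hnum : ((((1 - (r:ℂ)^2)^2 * (hpp * (starRingEnd ℂ) hp) - 2*(r:ℂ)*(1 - (r:ℂ)^2) * (u:ℂ))
          - ((1 - (r:ℂ)^2)^2 * ((starRingEnd ℂ) gp * gpp) - 2*(r:ℂ)*(1 - (r:ℂ)^2) * (v:ℂ)))).re
      = (1-r^2)^2 * (((starRingEnd ℂ) hp) * hpp).re - 2*r*(1-r^2)*u
        - ((1-r^2)^2 * (((starRingEnd ℂ) gp) * gpp).re - 2*r*(1-r^2)*v) := by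
    have h1 : (((1 - (r:ℂ)^2)^2 * (hpp * (starRingEnd ℂ) hp) - 2*(r:ℂ)*(1 - (r:ℂ)^2) * (u:ℂ))
            - ((1 - (r:ℂ)^2)^2 * ((starRingEnd ℂ) gp * gpp) - 2*(r:ℂ)*(1 - (r:ℂ)^2) * (v:ℂ)))
        = ((((1-r^2)^2 : ℝ)):ℂ) * ((starRingEnd ℂ) hp * hpp) - (((2*r*(1-r^2)*u : ℝ)):ℂ)
          - (((((1-r^2)^2 : ℝ)):ℂ) * ((starRingEnd ℂ) gp * gpp) - (((2*r*(1-r^2)*v : ℝ)):ℂ)) := by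
      push_cast
      ring
    rw [h1]
    simp only [Complex.sub_re, Complex.re_ofReal_mul, Complex.ofReal_re]
  rw [hnum] at hineq
  have hP : (0:ℝ) < 2*(1-r^2)*(u-v) := by positivity
  rw [le_div_iff₀ hP] at hineq
  have hL : -(4*aa/(1-r^2)) * ((1-r^2)^2*(u-v)) = 2*(-aa*(2*(1-r^2)*(u-v))) := by
    field_simp
    ring
  have : -(4*aa/(1-r^2)) * ((1-r^2)^2 * (u - v))
      ≤ (-(2*(1-r^2))*(2*r)) * (u - v)
        + (1-r^2)^2 * (2 * ((starRingEnd ℂ) hp * hpp).re - 2 * ((starRingEnd ℂ) gp * gpp).re) := by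
    rw [hL]
    linarith
  exact this



lemma rot_coeff_neg1 {f : ℂ → ℂ} (hf : DifferentiableOn ℂ f unitDisk) :
    coeffAt (Rt f ((starRingEnd ℂ) (-1)) (-1)) 2 = - coeffAt f 2 := by
  rw [coeffAt_two, coeffAt_two, rot_deriv2 hf (by simp : ‖(-1:ℂ)‖ = 1)]
  simp
  ring

set_option maxHeartbeats 2000000 in
lemma member_step {F : Set ((ℂ → ℂ) × (ℂ → ℂ))} (hF : IsAffineLinearInvariantFamily F)
    {a : ℝ} (hmaxa : ∀ p ∈ F, deriv p.2 0 = 0 → (coeffAt p.1 2).re ≤ a)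
    {h g : ℂ → ℂ} (mem : (h, g) ∈ F) {r : ℝ} (hr0 : 0 ≤ r) (hr1 : r < 1) :
    HasDerivAt (Jf h g) (JD h g r) r ∧ -(4*a/(1 - r^2)) * Jf h g r ≤ JD h g r := by
  have ns := hF.nsph (h, g) mem
  have hhd : DifferentiableOn ℂ h unitDisk := ns.h_analytic
  have hgd : DifferentiableOn ℂ g unitDisk := ns.g_analytic
  have hha : AnalyticOnNhd ℂ h unitDisk := hhd.analyticOnNhd ud_open
  have hga : AnalyticOnNhd ℂ g unitDisk := hgd.analyticOnNhd ud_open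
  have hrU : ((r:ℂ)) ∈ unitDisk := ofReal_mem_ud hr0 hr1
  have hp_ne : deriv h (r:ℂ) ≠ 0 := ns.dh_ne (r:ℂ) hrU
  have hsense : ‖deriv g (r:ℂ)‖ < ‖deriv h (r:ℂ)‖ :=
    ns.sense_preserving (r:ℂ) hrU
  have huv : Complex.normSq (deriv g (r:ℂ)) < Complex.normSq (deriv h (r:ℂ)) := by
    rw [Complex.normSq_eq_norm_sq, Complex.normSq_eq_norm_sq]
    have := norm_nonneg (deriv g (r:ℂ))
    nlinarith
  constructor
  · have hPd : HasDerivAt (fun t : ℝ => (1 - t^2)^2) (-(2*(1 - r^2))*(2*r)) r := by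
      have h1 : HasDerivAt (fun t : ℝ => 1 - t^2) (-(2*r)) r := by
        have h2 := (hasDerivAt_pow 2 r).const_sub 1
        refine h2.congr_deriv ?_
        push_cast
        ring
      have h3 := h1.pow 2
      refine h3.congr_deriv ?_
      push_cast
      ring
    have hU : HasDerivAt (fun t : ℝ => Complex.normSq (deriv h ((t:ℝ):ℂ)))
        (2 * ((starRingEnd ℂ) (deriv h (r:ℂ)) * deriv (deriv h) (r:ℂ)).re) r :=
      hasDerivAt_normSq_comp (((hha.deriv) (r:ℂ) hrU).differentiableAt.hasDerivAt)
    have hV : HasDerivAt (fun t : ℝ => Complex.normSq (deriv g ((t:ℝ):ℂ)))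
        (2 * ((starRingEnd ℂ) (deriv g (r:ℂ)) * deriv (deriv g) (r:ℂ)).re) r :=
      hasDerivAt_normSq_comp (((hga.deriv) (r:ℂ) hrU).differentiableAt.hasDerivAt)
    exact hPd.mul (hU.sub hV)
  · have memK : (Kt h r ((1 - (r:ℂ)^2) * deriv h (r:ℂ)), Kt g r ((1 - (r:ℂ)^2) * (starRingEnd ℂ) (deriv h (r:ℂ)))) ∈ F := by
      have hconj : (starRingEnd ℂ) ((r:ℂ)) = (r:ℂ) := Complex.conj_ofReal r
      have habs : ((‖((r:ℂ))‖ : ℝ) : ℂ) = ((r:ℂ)) := by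
        rw [Complex.norm_real, Real.norm_eq_abs, _root_.abs_of_nonneg hr0]
      have memK0 := hF.koebe_mem (h, g) mem (r:ℂ) hrU
      simp only [hconj, habs] at memK0
      exact memK0
    have nsK := hF.nsph _ memK
    have hKh1 : deriv (Kt h r ((1 - (r:ℂ)^2) * deriv h (r:ℂ))) 0 = 1 := nsK.dh_zero
    have hr2C : ((1:ℂ) - (r:ℂ)^2) ≠ 0 := by
      have h12 : (0:ℝ) < 1 - r^2 := by nlinarith
      have he : ((1:ℂ) - (r:ℂ)^2) = ((1 - r^2 : ℝ) : ℂ) := by push_cast; ring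
      rw [he]
      exact_mod_cast h12.ne'
    have hchp : (starRingEnd ℂ) (deriv h (r:ℂ)) ≠ 0 := by simpa using hp_ne
    have hβ : deriv (Kt g r ((1 - (r:ℂ)^2) * (starRingEnd ℂ) (deriv h (r:ℂ)))) 0 = deriv g (r:ℂ) / (starRingEnd ℂ) (deriv h (r:ℂ)) := by
      rw [koebe_deriv1 hga hr0 hr1]
      field_simp
    have hβU : deriv (Kt g r ((1 - (r:ℂ)^2) * (starRingEnd ℂ) (deriv h (r:ℂ)))) 0 ∈ unitDisk := by
      rw [mem_ud]
      have hs := nsK.sense_preserving 0 zero_mem_ud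
      rw [hKh1] at hs
      simpa using hs
    have memT := hF.affine_mem _ memK (deriv (Kt g r ((1 - (r:ℂ)^2) * (starRingEnd ℂ) (deriv h (r:ℂ)))) 0) hβU
    have memT' : (At (Kt h r ((1 - (r:ℂ)^2) * deriv h (r:ℂ))) (Kt g r ((1 - (r:ℂ)^2) * (starRingEnd ℂ) (deriv h (r:ℂ)))) ((starRingEnd ℂ) (deriv (Kt g r ((1 - (r:ℂ)^2) * (starRingEnd ℂ) (deriv h (r:ℂ)))) 0)) (1 - (starRingEnd ℂ) (deriv (Kt g r ((1 - (r:ℂ)^2) * (starRingEnd ℂ) (deriv h (r:ℂ)))) 0) * (deriv (Kt g r ((1 - (r:ℂ)^2) * (starRingEnd ℂ) (deriv h (r:ℂ)))) 0)), At (Kt g r ((1 - (r:ℂ)^2) * (starRingEnd ℂ) (deriv h (r:ℂ)))) (Kt h r ((1 - (r:ℂ)^2) * deriv h (r:ℂ))) (deriv (Kt g r ((1 - (r:ℂ)^2) * (starRingEnd ℂ) (deriv h (r:ℂ)))) 0) ((starRingEnd ℂ) (1 - (starRingEnd ℂ) (deriv (Kt g r ((1 - (r:ℂ)^2) * (starRingEnd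 ℂ) (deriv h (r:ℂ)))) 0) * (deriv (Kt g r ((1 - (r:ℂ)^2) * (starRingEnd ℂ) (deriv h (r:ℂ)))) 0)))) ∈ F := memT
    obtain ⟨B, hBdef⟩ : ∃ B : ℂ, deriv (Kt g r ((1 - (r:ℂ)^2) * (starRingEnd ℂ) (deriv h (r:ℂ)))) 0 = B := ⟨_, rfl⟩
    rw [hBdef] at hβ hβU memT'
    have nsT := hF.nsph _ memT'
    have memRT := hF.rot_mem _ memT' (-1) (by simp)
    have memRT' : (Rt (At (Kt h r ((1 - (r:ℂ)^2) * deriv h (r:ℂ))) (Kt g r ((1 - (r:ℂ)^2) * (starRingEnd ℂ) (deriv h (r:ℂ)))) ((starRingEnd ℂ) B) (1 - (starRingEnd ℂ) B * B)) ((starRingEnd ℂ) (-1)) (-1),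
        Rt (At (Kt g r ((1 - (r:ℂ)^2) * (starRingEnd ℂ) (deriv h (r:ℂ)))) (Kt h r ((1 - (r:ℂ)^2) * deriv h (r:ℂ))) B ((starRingEnd ℂ) (1 - (starRingEnd ℂ) B * B))) (-1) (-1)) ∈ F := memRT
    have hKgdiff : DifferentiableAt ℂ (Kt g r ((1 - (r:ℂ)^2) * (starRingEnd ℂ) (deriv h (r:ℂ)))) 0 :=
      nsK.g_analytic.differentiableAt (ud_open.mem_nhds zero_mem_ud)
    have hKhdiff : DifferentiableAt ℂ (Kt h r ((1 - (r:ℂ)^2) * deriv h (r:ℂ))) 0 :=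
      nsK.h_analytic.differentiableAt (ud_open.mem_nhds zero_mem_ud)
    have hT2diff : DifferentiableAt ℂ (At (Kt g r ((1 - (r:ℂ)^2) * (starRingEnd ℂ) (deriv h (r:ℂ)))) (Kt h r ((1 - (r:ℂ)^2) * deriv h (r:ℂ))) B ((starRingEnd ℂ) (1 - (starRingEnd ℂ) B * B))) 0 :=
      nsT.g_analytic.differentiableAt (ud_open.mem_nhds zero_mem_ud)
    have hT2d0 : deriv (At (Kt g r ((1 - (r:ℂ)^2) * (starRingEnd ℂ) (deriv h (r:ℂ)))) (Kt h r ((1 - (r:ℂ)^2) * deriv h (r:ℂ))) B ((starRingEnd ℂ) (1 - (starRingEnd ℂ) B * B))) 0 = 0 := by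
      rw [affine_deriv1 hKgdiff hKhdiff, hKh1, mul_one, hBdef, sub_self, zero_div]
    have hRT2d : deriv (Rt (At (Kt g r ((1 - (r:ℂ)^2) * (starRingEnd ℂ) (deriv h (r:ℂ)))) (Kt h r ((1 - (r:ℂ)^2) * deriv h (r:ℂ))) B ((starRingEnd ℂ) (1 - (starRingEnd ℂ) B * B))) (-1) (-1)) 0 = 0 := by
      rw [rot_deriv0 hT2diff, hT2d0]
      ring
    have hm := hmaxa _ memRT' hRT2d
    dsimp only at hm
    have hT1diff : DifferentiableOn ℂ (At (Kt h r ((1 - (r:ℂ)^2) * deriv h (r:ℂ))) (Kt g r ((1 - (r:ℂ)^2) * (starRingEnd ℂ) (deriv h (r:ℂ)))) ((starRingEnd ℂ) B) (1 - (starRingEnd ℂ) B * B)) unitDisk :=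
      nsT.h_analytic
    rw [rot_coeff_neg1 hT1diff, Complex.neg_re] at hm
    have hineq0 : -a ≤ (coeffAt (At (Kt h r ((1 - (r:ℂ)^2) * deriv h (r:ℂ))) (Kt g r ((1 - (r:ℂ)^2) * (starRingEnd ℂ) (deriv h (r:ℂ)))) ((starRingEnd ℂ) B) (1 - (starRingEnd ℂ) B * B)) 2).re := by
      linarith
    have hT1c : coeffAt (At (Kt h r ((1 - (r:ℂ)^2) * deriv h (r:ℂ))) (Kt g r ((1 - (r:ℂ)^2) * (starRingEnd ℂ) (deriv h (r:ℂ)))) ((starRingEnd ℂ) B) (1 - (starRingEnd ℂ) B * B)) 2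
        = ((deriv (deriv (Kt h r ((1 - (r:ℂ)^2) * deriv h (r:ℂ)))) 0
            - (starRingEnd ℂ) B * deriv (deriv (Kt g r ((1 - (r:ℂ)^2) * (starRingEnd ℂ) (deriv h (r:ℂ))))) 0) / (1 - (starRingEnd ℂ) B * B)) / 2 := by
      rw [coeffAt_two, affine_deriv2 nsK.h_analytic nsK.g_analytic]
    rw [hT1c, koebe_deriv2 hha hr0 hr1, koebe_deriv2 hga hr0 hr1, hβ] at hineq0
    have hfinal := core_identity hr0 hr1 hp_ne huv hineq0
    simp only [Jf, JD]
    exact hfinal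

lemma gronwall_lower {J Jd : ℝ → ℝ} {a ρ : ℝ} (ha : 0 ≤ a) (hρ0 : 0 ≤ ρ) (hρ1 : ρ < 1)
    (hJ0 : J 0 = 1)
    (hJ : ∀ r, 0 ≤ r → r ≤ ρ → HasDerivAt J (Jd r) r ∧ -(4*a/(1-r^2)) * J r ≤ Jd r) :
    Real.exp (-(2*a) * (Real.log (1+ρ) - Real.log (1-ρ))) ≤ J ρ := by
  set E : ℝ → ℝ := fun r => Real.exp ((2*a) * (Real.log (1+r) - Real.log (1-r))) with hE
  have hEpos : ∀ r, 0 < E r := fun r => Real.exp_pos _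
  have hW : ∀ r ∈ Icc (0:ℝ) ρ, HasDerivAt (fun t => J t * E t)
      (Jd r * E r + J r * (E r * ((2*a) * (1/(1+r) + 1/(1-r))))) r := by
    intro r hr
    obtain ⟨hr0, hrρ⟩ := hr
    have h1p : (0:ℝ) < 1 + r := by linarith
    have h1m : (0:ℝ) < 1 - r := by nlinarith
    have hl1 : HasDerivAt (fun t : ℝ => Real.log (1+t)) (1/(1+r)) r := by
      have hcomp := (Real.hasDerivAt_log h1p.ne').comp r ((hasDerivAt_id r).const_add 1)
      rw [one_div]; exact hcomp.congr_deriv (by simp)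
    have hl2 : HasDerivAt (fun t : ℝ => Real.log (1-t)) (-(1/(1-r))) r := by
      have hid : HasDerivAt (fun t : ℝ => 1-t) (-1 : ℝ) r := by
        simpa using (hasDerivAt_id r).const_sub 1
      have hcomp := (Real.hasDerivAt_log h1m.ne').comp r hid
      refine hcomp.congr_deriv ?_
      ring
    have hL : HasDerivAt (fun t : ℝ => Real.log (1+t) - Real.log (1-t)) (1/(1+r) + 1/(1-r)) r := by
      have := hl1.sub hl2
      refine this.congr_deriv ?_
      ring
    have hE' : HasDerivAt E (E r * ((2*a) * (1/(1+r) + 1/(1-r)))) r := by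
      have := (hL.const_mul (2*a)).exp
      simpa [hE] using this
    exact (hJ r hr0 hrρ).1.mul hE'
  have hmono : MonotoneOn (fun t => J t * E t) (Icc 0 ρ) := by
    apply monotoneOn_of_deriv_nonneg (convex_Icc 0 ρ)
    · intro r hr
      exact ((hW r hr).continuousAt.continuousWithinAt)
    · intro r hr
      rw [interior_Icc] at hr
      exact ((hW r ⟨hr.1.le, hr.2.le⟩).differentiableAt).differentiableWithinAt
    · intro r hr
      rw [interior_Icc] at hr
      have hr0 := hr.1.le
      have hrρ := hr.2.le
      rw [(hW r ⟨hr0, hrρ⟩).deriv]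
      have h1p : (0:ℝ) < 1 + r := by linarith
      have h1m : (0:ℝ) < 1 - r := by nlinarith
      have h12 : (0:ℝ) < 1 - r^2 := by nlinarith
      have hid2 : (2*a) * (1/(1+r) + 1/(1-r)) = 4*a/(1-r^2) := by
        field_simp
        ring
      rw [hid2]
      have hineq := (hJ r hr0 hrρ).2
      have hEr := hEpos r
      nlinarith [mul_le_mul_of_nonneg_right hineq hEr.le]
  have hmem0 : (0:ℝ) ∈ Icc (0:ℝ) ρ := ⟨le_refl 0, hρ0⟩
  have hmemρ : ρ ∈ Icc (0:ℝ) ρ := ⟨hρ0, le_refl ρ⟩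
  have hmle0 := hmono hmem0 hmemρ hρ0
  have hmle : J 0 * E 0 ≤ J ρ * E ρ := hmle0
  have hE0 : E 0 = 1 := by simp [hE]
  rw [hJ0, hE0, one_mul] at hmle
  have hEρ := hEpos ρ
  have hinv : (E ρ)⁻¹ ≤ J ρ := by
    rw [inv_le_iff_one_le_mul₀ hEρ]
    linarith [hmle]
  have hexp : Real.exp (-(2*a) * (Real.log (1+ρ) - Real.log (1-ρ))) = (E ρ)⁻¹ := by
    rw [hE, ← Real.exp_neg]
    congr 1
    ring
  rw [hexp]
  exact hinv

/-- If `f₀ = h₀ + conj g₀` in `F_H⁰` simultaneously maximizes `Re a_2(h)` and `Re b_2(g)`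
over all `f = h + conj g ∈ F_H⁰` (the maximal values being real), then
`a_2(h₀) > 1/2`. -/
theorem second_coefficient_maximizer_gt_half
    (F : Set ((ℂ → ℂ) × (ℂ → ℂ))) (hF : IsAffineLinearInvariantFamily F)
    (h₀ g₀ : ℂ → ℂ) (hmem : (h₀, g₀) ∈ F) (hg₀0 : deriv g₀ 0 = 0)
    (ha2real : (coeffAt h₀ 2).im = 0) (hb2real : (coeffAt g₀ 2).im = 0)
    (hmax : ∀ h g : ℂ → ℂ, (h, g) ∈ F → deriv g 0 = 0 →
      (coeffAt h 2).re ≤ (coeffAt h₀ 2).re ∧ (coeffAt g 2).re ≤ (coeffAt g₀ 2).re) :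
    1 / 2 < (coeffAt h₀ 2).re := by
  by_contra hcon
  push_neg at hcon
  set a := (coeffAt h₀ 2).re with ha_def
  have ns0 := hF.nsph (h₀, g₀) hmem
  have hh0d : DifferentiableOn ℂ h₀ unitDisk := ns0.h_analytic
  have hg0d : DifferentiableOn ℂ g₀ unitDisk := ns0.g_analytic
  have hh0a : AnalyticOnNhd ℂ h₀ unitDisk := hh0d.analyticOnNhd ud_open
  have hg0diff : DifferentiableAt ℂ g₀ 0 := hg0d.differentiableAt (ud_open.mem_nhds zero_mem_ud)
  have hmaxa : ∀ p ∈ F, deriv p.2 0 = 0 → (coeffAt p.1 2).re ≤ a := by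
    intro p hp hd
    exact (hmax p.1 p.2 hp hd).1
  -- Step 1 : 0 ≤ a
  have ha0 : (0:ℝ) ≤ a := by
    have memR := hF.rot_mem (h₀, g₀) hmem (-1) (by simp)
    have memR' : (Rt h₀ ((starRingEnd ℂ) (-1)) (-1), Rt g₀ (-1) (-1)) ∈ F := memR
    have hd2 : deriv (Rt g₀ (-1) (-1)) 0 = 0 := by
      rw [rot_deriv0 hg0diff, hg₀0]
      ring
    have hm := hmaxa _ memR' hd2
    dsimp only at hm
    rw [rot_coeff_neg1 hh0d, Complex.neg_re] at hm
    linarith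
  set ρ : ℝ := 31/32 with hρ_def
  -- Step 2 : pointwise lower bound for |h₀'| on the circle of radius ρ
  have key2 : ∀ z : ℂ, ‖z‖ = ρ → (4:ℝ) ≤ Complex.normSq (deriv h₀ z) := by
    intro z hz
    have hρpos : (0:ℝ) < ρ := by norm_num [hρ_def]
    have hρC : ((ρ:ℝ):ℂ) ≠ 0 := by
      exact_mod_cast hρpos.ne'
    have hlam1 : ‖z / (ρ:ℂ)‖ = 1 := by
      rw [norm_div, hz, Complex.norm_real, Real.norm_eq_abs, _root_.abs_of_pos hρpos]
      field_simp
    have memR := hF.rot_mem (h₀, g₀) hmem (z / (ρ:ℂ)) hlam1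
    have memR' : (Rt h₀ ((starRingEnd ℂ) (z / (ρ:ℂ))) (z / (ρ:ℂ)), Rt g₀ (z / (ρ:ℂ)) (z / (ρ:ℂ))) ∈ F := memR
    have nsR := hF.nsph _ memR'
    have hgR : deriv (Rt g₀ (z / (ρ:ℂ)) (z / (ρ:ℂ))) 0 = 0 := by
      rw [rot_deriv0 hg0diff, hg₀0]
      ring
    have hJ0 : Jf (Rt h₀ ((starRingEnd ℂ) (z / (ρ:ℂ))) (z / (ρ:ℂ))) (Rt g₀ (z / (ρ:ℂ)) (z / (ρ:ℂ))) 0 = 1 := by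
      have h1 : deriv (Rt h₀ ((starRingEnd ℂ) (z / (ρ:ℂ))) (z / (ρ:ℂ))) (0:ℂ) = 1 := nsR.dh_zero
      simp only [Jf]
      rw [Complex.ofReal_zero, h1, hgR]
      norm_num
    have hkey := gronwall_lower (Jd := JD (Rt h₀ ((starRingEnd ℂ) (z / (ρ:ℂ))) (z / (ρ:ℂ))) (Rt g₀ (z / (ρ:ℂ)) (z / (ρ:ℂ))))
      ha0 hρpos.le (by norm_num [hρ_def]) hJ0
      (fun r hr0 hrρ => member_step hF hmaxa memR' hr0 (lt_of_le_of_lt hrρ (by norm_num [hρ_def])))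
    -- identify the rotated derivative
    have hzU : z ∈ unitDisk := by
      rw [mem_ud, hz]
      norm_num [hρ_def]
    have hlamρ : (z / (ρ:ℂ)) * ((ρ:ℝ):ℂ) = z := by
      field_simp
    have hmemlam : DifferentiableAt ℂ h₀ ((z / (ρ:ℂ)) * ((ρ:ℝ):ℂ)) := by
      rw [hlamρ]
      exact hh0d.differentiableAt (ud_open.mem_nhds hzU)
    have hrot : deriv (Rt h₀ ((starRingEnd ℂ) (z / (ρ:ℂ))) (z / (ρ:ℂ))) ((ρ:ℝ):ℂ)
        = (starRingEnd ℂ) (z / (ρ:ℂ)) * (z / (ρ:ℂ)) * deriv h₀ z := by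
      rw [(rot_hasDerivAt hmemlam).deriv, hlamρ]
    have hnormlam : Complex.normSq ((starRingEnd ℂ) (z / (ρ:ℂ)) * (z / (ρ:ℂ))) = 1 := by
      rw [Complex.normSq_mul, Complex.normSq_conj, Complex.normSq_eq_norm_sq, hlam1]
      norm_num
    have hJle : Jf (Rt h₀ ((starRingEnd ℂ) (z / (ρ:ℂ))) (z / (ρ:ℂ))) (Rt g₀ (z / (ρ:ℂ)) (z / (ρ:ℂ))) ρ
        ≤ (1 - ρ^2)^2 * Complex.normSq (deriv h₀ z) := by
      simp only [Jf]
      rw [hrot, Complex.normSq_mul, hnormlam, one_mul]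
      have := Complex.normSq_nonneg (deriv (Rt g₀ (z / (ρ:ℂ)) (z / (ρ:ℂ))) ((ρ:ℝ):ℂ))
      nlinarith [sq_nonneg (1 - ρ^2)]
    have hexp : (1:ℝ)/63 ≤ Real.exp (-(2*a) * (Real.log (1+ρ) - Real.log (1-ρ))) := by
      have hL : Real.log (1+ρ) - Real.log (1-ρ) = Real.log ((1+ρ)/(1-ρ)) :=
        (Real.log_div (by norm_num [hρ_def]) (by norm_num [hρ_def])).symm
      have hLpos : 0 ≤ Real.log ((1+ρ)/(1-ρ)) := Real.log_nonneg (by norm_num [hρ_def])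
      have h1 : -(1:ℝ) * Real.log ((1+ρ)/(1-ρ)) ≤ -(2*a) * Real.log ((1+ρ)/(1-ρ)) := by
        nlinarith
      have h2 : Real.exp (-(1:ℝ) * Real.log ((1+ρ)/(1-ρ))) = 1/63 := by
        rw [neg_one_mul, Real.exp_neg, Real.exp_log (by norm_num [hρ_def] : (0:ℝ) < (1+ρ)/(1-ρ))]
        norm_num [hρ_def]
      rw [hL, ← h2]
      exact Real.exp_le_exp.mpr h1
    have hchain : (1:ℝ)/63 ≤ (1 - ρ^2)^2 * Complex.normSq (deriv h₀ z) := by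
      linarith
    nlinarith [hchain]
  -- Step 3 : maximum modulus principle for 1/h₀' gives a contradiction
  have hρne : (ρ:ℝ) ≠ 0 := by norm_num [hρ_def]
  have hbound : ∀ z ∈ frontier (Metric.ball (0:ℂ) ρ), ‖(deriv h₀ z)⁻¹‖ ≤ 1/2 := by
    intro z hzf
    rw [frontier_ball (0:ℂ) hρne] at hzf
    have hz : ‖z‖ = ρ := by
      have := Metric.mem_sphere.mp hzf
      rwa [Complex.dist_eq, sub_zero] at this
    have h4 := key2 z hz
    have habs2 : (2:ℝ) ≤ ‖deriv h₀ z‖ := by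
      have hn := Complex.normSq_eq_norm_sq (deriv h₀ z)
      nlinarith [norm_nonneg (deriv h₀ z)]
    rw [norm_inv]
    have hpos : (0:ℝ) < ‖deriv h₀ z‖ := by linarith
    have hinv : (‖deriv h₀ z‖)⁻¹ * ‖deriv h₀ z‖ = 1 :=
      inv_mul_cancel₀ hpos.ne'
    nlinarith [inv_nonneg.mpr (norm_nonneg (deriv h₀ z))]
  have hdc : DiffContOnCl ℂ (fun z => (deriv h₀ z)⁻¹) (Metric.ball (0:ℂ) ρ) := by
    apply DifferentiableOn.diffContOnCl
    rw [closure_ball (0:ℂ) hρne]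
    intro z hzc
    have hzU : z ∈ unitDisk := by
      rw [mem_ud]
      have := Metric.mem_closedBall.mp hzc
      rw [Complex.dist_eq, sub_zero] at this
      calc ‖z‖ ≤ ρ := this
        _ < 1 := by norm_num [hρ_def]
    exact ((hh0a.deriv z hzU).differentiableAt.differentiableWithinAt).inv (ns0.dh_ne z hzU)
  have h0cl : (0:ℂ) ∈ closure (Metric.ball (0:ℂ) ρ) :=
    subset_closure (Metric.mem_ball_self (by norm_num [hρ_def]))
  have hfin := Complex.norm_le_of_forall_mem_frontier_norm_le Metric.isBounded_ball hdc hbound h0cl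
  have hdz : deriv h₀ 0 = 1 := ns0.dh_zero
  rw [hdz] at hfin
  norm_num at hfin
end
end

section
/- Let F_H be an affine and linear invariant family of normalized sense-preserving harmonic mappings on 𝔻. Suppose there exists f_0 = h_0 + conj(g_0) ∈ F_H^0 such that for every integer n ≥ 2 and every f = h + conj(g) ∈ F_H^0 one has Re(a_n(h)) ≤ a_n(h_0) and Re(b_n(g)) ≤ b_n(g_0) (all a_n(h_0), b_n(g_0) being nonnegative real numbers). Then the order of F_H equals α(F_H) = a_2(h_0) + b_2(g_0). -/
open Complex Set

noncomputable section

namespace OrderAux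

lemma isOpen_unitDisk : IsOpen unitDisk := by
  have : unitDisk = Metric.ball (0:ℂ) 1 := by
    ext z; simp [unitDisk, Metric.mem_ball, Complex.dist_eq]
  rw [this]; exact Metric.isOpen_ball

lemma zero_mem_unitDisk : (0:ℂ) ∈ unitDisk := by simp [unitDisk]

lemma mul_mem_unitDisk {l z : ℂ} (hl : ‖l‖ ≤ 1) (hz : z ∈ unitDisk) :
    l * z ∈ unitDisk := by
  have hz' : ‖z‖ < 1 := hz
  have : ‖l * z‖ ≤ ‖z‖ := by
    rw [norm_mul]
    nlinarith [norm_nonneg z, norm_nonneg l]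
  exact lt_of_le_of_lt this hz'

lemma itdW_eq {f : ℂ → ℂ} {n : ℕ} {z : ℂ} (hz : z ∈ unitDisk) :
    iteratedDerivWithin n f unitDisk z = iteratedDeriv n f z := by
  rw [iteratedDerivWithin_eq_iteratedFDerivWithin, iteratedDeriv_eq_iteratedFDeriv,
    iteratedFDerivWithin_of_isOpen n isOpen_unitDisk hz]

lemma itd_const_mul (a : ℂ) (f : ℂ → ℂ) (n : ℕ) :
    iteratedDeriv n (fun z => a * f z) = fun x => a * iteratedDeriv n f x := by
  induction n with
  | zero => rfl
  | succ n ih =>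
    rw [iteratedDeriv_succ, ih, iteratedDeriv_succ]
    exact deriv_const_mul_field' a

lemma analyticOnNhd_itd {f : ℂ → ℂ} (hf : AnalyticOnNhd ℂ f unitDisk) (n : ℕ) :
    AnalyticOnNhd ℂ (iteratedDeriv n f) unitDisk := by
  induction n with
  | zero => simpa using hf
  | succ n ih => rw [iteratedDeriv_succ]; exact ih.deriv

lemma analyticOnNhd_rot {f : ℂ → ℂ} (hf : AnalyticOnNhd ℂ f unitDisk) {l : ℂ}
    (hl : ‖l‖ ≤ 1) : AnalyticOnNhd ℂ (fun z => f (l * z)) unitDisk := by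
  have h1 : AnalyticOnNhd ℂ (fun z : ℂ => l * z) unitDisk :=
    fun z _ => (analyticAt_const.mul analyticAt_id)
  exact hf.comp h1 (fun z hz => mul_mem_unitDisk hl hz)

lemma itd_comp_mul {f : ℂ → ℂ} (hf : AnalyticOnNhd ℂ f unitDisk) {l : ℂ}
    (hl : ‖l‖ ≤ 1) (n : ℕ) :
    ∀ z ∈ unitDisk, iteratedDeriv n (fun w => f (l * w)) z = l ^ n * iteratedDeriv n f (l * z) := by
  induction n with
  | zero => intro z _; simp
  | succ n ih =>
    intro z hz
    have hE : Set.EqOn (iteratedDeriv n (fun w => f (l * w)))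
        (fun w => l ^ n * iteratedDeriv n f (l * w)) unitDisk := fun w hw => ih w hw
    have hev : iteratedDeriv n (fun w => f (l * w))
        =ᶠ[nhds z] fun w => l ^ n * iteratedDeriv n f (l * w) :=
      hE.eventuallyEq_of_mem (isOpen_unitDisk.mem_nhds hz)
    rw [iteratedDeriv_succ, hev.deriv_eq, deriv_const_mul_field]
    have hA : AnalyticAt ℂ (iteratedDeriv n f) (l * z) :=
      analyticOnNhd_itd hf n _ (mul_mem_unitDisk hl hz)
    have hc : HasDerivAt (fun w : ℂ => l * w) l z := by
      simpa using (hasDerivAt_id z).const_mul l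
    have hcomp : HasDerivAt (fun w => iteratedDeriv n f (l * w))
        (deriv (iteratedDeriv n f) (l * z) * l) z :=
      (hA.differentiableAt.hasDerivAt).comp z hc
    rw [hcomp.deriv, iteratedDeriv_succ]
    ring

lemma itd_sub {f g : ℂ → ℂ} (hf : AnalyticOnNhd ℂ f unitDisk)
    (hg : AnalyticOnNhd ℂ g unitDisk) (c : ℂ) (n : ℕ) :
    iteratedDeriv n (fun z => f z - c * g z) 0
      = iteratedDeriv n f 0 - c * iteratedDeriv n g 0 := by
  have h0 := zero_mem_unitDisk
  have hu : UniqueDiffOn ℂ unitDisk := isOpen_unitDisk.uniqueDiffOn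
  have hcf : ContDiffOn ℂ n f unitDisk := hf.contDiffOn isOpen_unitDisk.uniqueDiffOn
  have hcg : ContDiffOn ℂ n (fun z => c * g z) unitDisk := by
    exact (contDiffOn_const.mul (hg.contDiffOn isOpen_unitDisk.uniqueDiffOn))
  have e1 : (fun z => f z - c * g z) = (f - fun z => c * g z) := rfl
  rw [e1, ← itdW_eq h0, iteratedDerivWithin_sub h0 hu (hcf 0 h0) (hcg 0 h0),
    iteratedDerivWithin_const_mul h0 hu c (hg.contDiffOn isOpen_unitDisk.uniqueDiffOn 0 h0),
    itdW_eq h0, itdW_eq h0]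

lemma itd_affine {f g : ℂ → ℂ} (hf : AnalyticOnNhd ℂ f unitDisk)
    (hg : AnalyticOnNhd ℂ g unitDisk) (c d : ℂ) (n : ℕ) :
    iteratedDeriv n (fun z => (f z - c * g z) / d) 0
      = (iteratedDeriv n f 0 - c * iteratedDeriv n g 0) / d := by
  have e1 : (fun z => (f z - c * g z) / d) = fun z => d⁻¹ * ((fun w => f w - c * g w) z) := by
    funext z; rw [div_eq_inv_mul]
  rw [e1, itd_const_mul d⁻¹ (fun w => f w - c * g w) n]
  show d⁻¹ * iteratedDeriv n (fun z => f z - c * g z) 0 = _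
  rw [itd_sub hf hg c n, div_eq_inv_mul]

lemma itd_rot_zero {f : ℂ → ℂ} (hf : AnalyticOnNhd ℂ f unitDisk) {l : ℂ}
    (hl : ‖l‖ ≤ 1) (a : ℂ) (n : ℕ) :
    iteratedDeriv n (fun z => a * f (l * z)) 0 = a * l ^ n * iteratedDeriv n f 0 := by
  have h1 : iteratedDeriv n (fun z => a * f (l * z)) 0
      = a * iteratedDeriv n (fun z => f (l * z)) 0 :=
    congrFun (itd_const_mul a (fun z => f (l * z)) n) 0
  rw [h1, itd_comp_mul hf hl n 0 zero_mem_unitDisk, mul_zero, mul_assoc]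

lemma coeffAt_affine {f g : ℂ → ℂ} (hf : AnalyticOnNhd ℂ f unitDisk)
    (hg : AnalyticOnNhd ℂ g unitDisk) (c d : ℂ) (n : ℕ) :
    coeffAt (fun z => (f z - c * g z) / d) n = (coeffAt f n - c * coeffAt g n) / d := by
  simp only [coeffAt]
  rw [itd_affine hf hg c d n]
  ring

lemma coeffAt_rot {f : ℂ → ℂ} (hf : AnalyticOnNhd ℂ f unitDisk) {l : ℂ}
    (hl : ‖l‖ ≤ 1) (a : ℂ) (n : ℕ) :
    coeffAt (fun z => a * f (l * z)) n = a * l ^ n * coeffAt f n := by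
  simp only [coeffAt]
  rw [itd_rot_zero hf hl a n]
  ring

lemma deriv_affine {f g : ℂ → ℂ} (hf : AnalyticOnNhd ℂ f unitDisk)
    (hg : AnalyticOnNhd ℂ g unitDisk) (c d : ℂ) :
    deriv (fun z => (f z - c * g z) / d) 0 = (deriv f 0 - c * deriv g 0) / d := by
  have := itd_affine hf hg c d 1
  simpa [iteratedDeriv_one] using this

lemma deriv_rot {f : ℂ → ℂ} (hf : AnalyticOnNhd ℂ f unitDisk) {l : ℂ}
    (hl : ‖l‖ ≤ 1) (a : ℂ) :
    deriv (fun z => a * f (l * z)) 0 = a * l * deriv f 0 := by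
  have := itd_rot_zero hf hl a 1
  simpa [iteratedDeriv_one] using this

end OrderAux

/-- If `f₀ = h₀ + conj g₀ ∈ F_H⁰` simultaneously maximizes `Re a_n(h)` and `Re b_n(g)` over
`F_H⁰` for every `n ≥ 2` (the maximal values being nonnegative real numbers), then the
order of the family, `α(F_H) = sup_{f = h + conj g ∈ F_H} |a_2(h)|`, equals
`a_2(h₀) + b_2(g₀)`. -/
theorem order_of_family_with_coefficient_maximizer
    (F : Set ((ℂ → ℂ) × (ℂ → ℂ))) (hF : IsAffineLinearInvariantFamily F)
    (h₀ g₀ : ℂ → ℂ) (hmem : (h₀, g₀) ∈ F) (hg₀0 : deriv g₀ 0 = 0)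
    (hmax : ∀ n : ℕ, 2 ≤ n →
      (coeffAt h₀ n).im = 0 ∧ 0 ≤ (coeffAt h₀ n).re ∧
      (coeffAt g₀ n).im = 0 ∧ 0 ≤ (coeffAt g₀ n).re ∧
      ∀ h g : ℂ → ℂ, (h, g) ∈ F → deriv g 0 = 0 →
        (coeffAt h n).re ≤ (coeffAt h₀ n).re ∧ (coeffAt g n).re ≤ (coeffAt g₀ n).re) :
    sSup {r : ℝ | ∃ p ∈ F, r = ‖coeffAt p.1 2‖}
      = (coeffAt h₀ 2).re + (coeffAt g₀ 2).re := by
  classical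
  obtain ⟨himA, hA0, himB, hB0, hbound⟩ := hmax 2 le_rfl
  set A : ℝ := (coeffAt h₀ 2).re with hAdef
  set B : ℝ := (coeffAt g₀ 2).re with hBdef
  have hcA : coeffAt h₀ 2 = (A : ℂ) := by
    apply Complex.ext <;> simp [himA, hAdef]
  have hcB : coeffAt g₀ 2 = (B : ℂ) := by
    apply Complex.ext <;> simp [himB, hBdef]
  have hns₀ := hF.nsph _ hmem
  have hh₀ : AnalyticOnNhd ℂ h₀ unitDisk :=
    hns₀.h_analytic.analyticOnNhd OrderAux.isOpen_unitDisk
  have hg₀a : AnalyticOnNhd ℂ g₀ unitDisk :=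
    hns₀.g_analytic.analyticOnNhd OrderAux.isOpen_unitDisk
  set S : Set ℝ := {r : ℝ | ∃ p ∈ F, r = ‖coeffAt p.1 2‖} with hSdef
  -- upper bound
  have upper : ∀ h g : ℂ → ℂ, (h, g) ∈ F → ‖coeffAt h 2‖ ≤ A + B := by
    intro h g hp
    have hns := hF.nsph _ hp
    have hh : AnalyticOnNhd ℂ h unitDisk :=
      hns.h_analytic.analyticOnNhd OrderAux.isOpen_unitDisk
    have hga : AnalyticOnNhd ℂ g unitDisk :=
      hns.g_analytic.analyticOnNhd OrderAux.isOpen_unitDisk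
    have hb1 : ‖deriv g 0‖ < 1 := by
      have := hns.sense_preserving 0 OrderAux.zero_mem_unitDisk
      rwa [hns.dh_zero, norm_one] at this
    set b1 : ℂ := deriv g 0 with hb1def
    set a2 : ℂ := coeffAt h 2 with ha2def
    set b2 : ℂ := coeffAt g 2 with hb2def
    set d : ℂ := 1 - (starRingEnd ℂ) b1 * b1 with hddef
    have hdre : d = ((1 - ‖b1‖ ^ 2 : ℝ) : ℂ) := by
      rw [hddef, mul_comm, Complex.mul_conj, Complex.normSq_eq_norm_sq]
      push_cast; ring
    have hd0 : d ≠ 0 := by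
      rw [hdre]
      intro hc
      rw [Complex.ofReal_eq_zero] at hc
      nlinarith [norm_nonneg b1]
    set u : ℂ := (a2 - (starRingEnd ℂ) b1 * b2) / d with hudef
    set v : ℂ := (b2 - b1 * a2) / d with hvdef
    have key : ∀ lam : ℂ, ‖lam‖ = 1 →
        (lam * u).re ≤ A ∧ (lam ^ 3 * v).re ≤ B := by
      intro lam hlam
      have hl1 : ‖lam‖ ≤ 1 := le_of_eq hlam
      have hlam0 : lam ≠ 0 := by
        intro hc; rw [hc] at hlam; simp at hlam
      have hc1 : (starRingEnd ℂ) lam * lam = 1 := by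
        rw [mul_comm, Complex.mul_conj, Complex.normSq_eq_norm_sq, hlam]
        norm_num
      have hclam : (starRingEnd ℂ) lam = lam⁻¹ := eq_inv_of_mul_eq_one_left hc1
      set H1 : ℂ → ℂ := fun z => (starRingEnd ℂ) lam * h (lam * z) with hH1def
      set G1 : ℂ → ℂ := fun z => lam * g (lam * z) with hG1def
      have hq : (H1, G1) ∈ F := hF.rot_mem _ hp lam hlam
      have hH1a : AnalyticOnNhd ℂ H1 unitDisk := fun z hz =>
        analyticAt_const.mul ((OrderAux.analyticOnNhd_rot hh hl1) z hz)
      have hG1a : AnalyticOnNhd ℂ G1 unitDisk := fun z hz =>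
        analyticAt_const.mul ((OrderAux.analyticOnNhd_rot hga hl1) z hz)
      have hG1d : deriv G1 0 = lam ^ 2 * b1 := by
        rw [hG1def]
        rw [OrderAux.deriv_rot hga hl1 lam, ← hb1def]
        ring
      have hH1d : deriv H1 0 = 1 := by
        rw [hH1def, OrderAux.deriv_rot hh hl1 ((starRingEnd ℂ) lam), hns.dh_zero, mul_one, hc1]
      set ε : ℂ := lam ^ 2 * b1 with hεdef
      have hεm : ε ∈ unitDisk := by
        show ‖ε‖ < 1
        rw [hεdef, norm_mul, norm_pow, hlam]
        simpa using hb1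
      have hr : ((fun z => (H1 z - (starRingEnd ℂ) ε * G1 z) /
            (1 - (starRingEnd ℂ) ε * deriv G1 0)),
          (fun z => (G1 z - ε * H1 z) /
            (starRingEnd ℂ) (1 - (starRingEnd ℂ) ε * deriv G1 0))) ∈ F :=
        hF.affine_mem _ hq ε hεm
      have hden : 1 - (starRingEnd ℂ) ε * deriv G1 0 = d := by
        rw [hG1d, hεdef, hddef, map_mul, map_pow, hclam]
        field_simp
      have hdconj : (starRingEnd ℂ) d = d := by
        rw [hdre]
        exact Complex.conj_ofReal _
      rw [hden, hdconj] at hr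
      -- second component has vanishing derivative at 0
      have hder2 : deriv (fun z => (G1 z - ε * H1 z) / d) 0 = 0 := by
        rw [OrderAux.deriv_affine hG1a hH1a ε d, hG1d, hH1d, hεdef]
        simp
      obtain ⟨c1, c2⟩ := hbound _ _ hr hder2
      have hco1 : coeffAt (fun z => (H1 z - (starRingEnd ℂ) ε * G1 z) / d) 2 = lam * u := by
        rw [OrderAux.coeffAt_affine hH1a hG1a ((starRingEnd ℂ) ε) d 2, hH1def, hG1def,
          OrderAux.coeffAt_rot hh hl1 ((starRingEnd ℂ) lam) 2,
          OrderAux.coeffAt_rot hga hl1 lam 2, ← ha2def, ← hb2def, hudef, hεdef,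
          map_mul, map_pow, hclam, ← mul_div_assoc]
        congr 1
        field_simp
      have hco2 : coeffAt (fun z => (G1 z - ε * H1 z) / d) 2 = lam ^ 3 * v := by
        rw [OrderAux.coeffAt_affine hG1a hH1a ε d 2, hH1def, hG1def,
          OrderAux.coeffAt_rot hh hl1 ((starRingEnd ℂ) lam) 2,
          OrderAux.coeffAt_rot hga hl1 lam 2, ← ha2def, ← hb2def, hvdef, hεdef, hclam,
          ← mul_div_assoc]
        congr 1
        field_simp
      rw [hco1] at c1
      rw [hco2] at c2
      exact ⟨c1, c2⟩
    have habs_u : ‖u‖ ≤ A := by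
      rcases eq_or_ne u 0 with h0 | h0
      · simpa [h0] using hA0
      · have hau : (‖u‖ : ℝ) ≠ 0 := norm_ne_zero_iff.mpr h0
        have hlam : ‖(starRingEnd ℂ) u / (‖u‖ : ℂ)‖ = 1 := by
          rw [norm_div, Complex.norm_conj, Complex.norm_real, Real.norm_eq_abs, _root_.abs_of_nonneg (norm_nonneg u)]
          exact div_self hau
        have hmul : ((starRingEnd ℂ) u / (‖u‖ : ℂ)) * u = ((‖u‖ : ℝ) : ℂ) := by
          rw [div_mul_eq_mul_div, mul_comm, Complex.mul_conj, Complex.normSq_eq_norm_sq]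
          rw [show ((‖u‖ ^ 2 : ℝ) : ℂ) = (‖u‖ : ℂ) ^ 2 by push_cast; ring]
          rw [sq]
          rw [mul_div_assoc, div_self (by exact_mod_cast hau), mul_one]
        have := (key _ hlam).1
        rw [hmul] at this
        simpa using this
    have habs_v : ‖v‖ ≤ B := by
      rcases eq_or_ne v 0 with h0 | h0
      · simpa [h0] using hB0
      · have hav : (‖v‖ : ℝ) ≠ 0 := norm_ne_zero_iff.mpr h0
        set w : ℂ := (starRingEnd ℂ) v / (‖v‖ : ℂ) with hwdef
        have hw : ‖w‖ = 1 := by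
          rw [hwdef, norm_div, Complex.norm_conj, Complex.norm_real, Real.norm_eq_abs,
            _root_.abs_of_nonneg (norm_nonneg v)]
          exact div_self hav
        set lam : ℂ := w ^ (((3 : ℕ) : ℂ)⁻¹) with hlamdef
        have hl3 : lam ^ (3 : ℕ) = w := Complex.cpow_nat_inv_pow w (by norm_num)
        have hlabs : ‖lam‖ = 1 := by
          have h3 : ‖lam‖ ^ (3 : ℕ) = 1 := by
            rw [← norm_pow, hl3, hw]
          nlinarith [norm_nonneg lam, sq_nonneg (‖lam‖ - 1),
            sq_nonneg (‖lam‖ + 1)]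
        have hmul : lam ^ 3 * v = ((‖v‖ : ℝ) : ℂ) := by
          rw [hl3, hwdef, div_mul_eq_mul_div, mul_comm, Complex.mul_conj,
            Complex.normSq_eq_norm_sq]
          rw [show ((‖v‖ ^ 2 : ℝ) : ℂ) = (‖v‖ : ℂ) ^ 2 by push_cast; ring]
          rw [sq, mul_div_assoc, div_self (by exact_mod_cast hav), mul_one]
        have := (key lam hlabs).2
        rw [hmul] at this
        simpa using this
    have ha2eq : a2 = u + (starRingEnd ℂ) b1 * v := by
      rw [hudef, hvdef, hddef]
      have hd0' : (1 - (starRingEnd ℂ) b1 * b1) ≠ 0 := hddef ▸ hd0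
      field_simp
      ring
    calc ‖a2‖ = ‖u + (starRingEnd ℂ) b1 * v‖ := by rw [ha2eq]
      _ ≤ ‖u‖ + ‖(starRingEnd ℂ) b1 * v‖ := norm_add_le _ _
      _ = ‖u‖ + ‖b1‖ * ‖v‖ := by
          rw [norm_mul, Complex.norm_conj]
      _ ≤ A + 1 * B := by
          have h1 : ‖b1‖ * ‖v‖ ≤ 1 * B :=
            mul_le_mul hb1.le habs_v (norm_nonneg v) zero_le_one
          linarith
      _ = A + B := by ring
  -- lower bound elements
  have lower : ∀ t : ℝ, t ∈ Set.Ioo (0 : ℝ) 1 → (A + t * B) ∈ S := by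
    intro t ht
    have hεm : (-(t : ℂ)) ∈ unitDisk := by
      show ‖-(t : ℂ)‖ < 1
      rw [norm_neg, Complex.norm_real, Real.norm_eq_abs, abs_of_pos ht.1]
      exact ht.2
    refine ⟨_, hF.affine_mem _ hmem (-(t : ℂ)) hεm, ?_⟩
    show A + t * B = ‖coeffAt
      (fun z => (h₀ z - (starRingEnd ℂ) (-(t : ℂ)) * g₀ z) /
        (1 - (starRingEnd ℂ) (-(t : ℂ)) * deriv g₀ 0)) 2‖
    rw [OrderAux.coeffAt_affine hh₀ hg₀a _ _ 2, hg₀0, hcA, hcB]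
    have hct : (starRingEnd ℂ) (-(t : ℂ)) = -(t : ℂ) := by
      rw [map_neg, Complex.conj_ofReal]
    rw [hct]
    rw [show ((A : ℂ) - -(t : ℂ) * (B : ℂ)) / (1 - -(t : ℂ) * 0) = ((A + t * B : ℝ) : ℂ) by
      push_cast; ring]
    have habs : ‖(((A + t * B : ℝ)) : ℂ)‖ = A + t * B := by
      rw [Complex.norm_real, Real.norm_eq_abs]
      exact _root_.abs_of_nonneg (by nlinarith [ht.1.le])
    rw [habs]
  -- conclude
  have hne : S.Nonempty := ⟨‖coeffAt h₀ 2‖, ⟨(h₀, g₀), hmem, rfl⟩⟩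
  have hub : ∀ r ∈ S, r ≤ A + B := by
    rintro r ⟨p, hpF, rfl⟩
    exact upper p.1 p.2 (by simpa using hpF)
  have hbdd : BddAbove S := ⟨A + B, fun r hr => hub r hr⟩
  apply le_antisymm
  · exact csSup_le hne hub
  · apply le_of_forall_pos_le_add
    intro δ hδ
    have hBpos : (0 : ℝ) < B + 1 := by linarith
    set t : ℝ := max (1 / 2) (1 - δ / (B + 1)) with htdef
    have ht : t ∈ Set.Ioo (0 : ℝ) 1 := by
      constructor
      · have : (0 : ℝ) < 1 / 2 := by norm_num
        exact lt_of_lt_of_le this (le_max_left _ _)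
      · apply max_lt
        · norm_num
        · have : 0 < δ / (B + 1) := div_pos hδ hBpos
          linarith
    have hmemS := lower t ht
    have hle : A + t * B ≤ sSup S := le_csSup hbdd hmemS
    have htB : B - δ ≤ t * B := by
      have h1 : 1 - δ / (B + 1) ≤ t := le_max_right _ _
      have h2 : (1 - δ / (B + 1)) * B ≤ t * B := mul_le_mul_of_nonneg_right h1 hB0
      have h3 : B - δ ≤ (1 - δ / (B + 1)) * B := by
        rw [sub_mul, one_mul]
        have : δ / (B + 1) * B ≤ δ := by
          rw [div_mul_eq_mul_div, div_le_iff₀ hBpos]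
          nlinarith
        linarith
      linarith
    linarith
end
end

section
/- For all λ, μ ∈ ℂ with |λ| = |μ| = 1, every a ∈ ℂ and every 0 ≤ R ≤ 1, there exist unique analytic functions h, g on 𝔻 with h(0) = g(0) = 0, h − λ·g = k_a and g' = μ·l_R·h'; moreover h'(0) = 1, h' is nonvanishing on 𝔻 and |g'(z)| < |h'(z)| for all z ∈ 𝔻, so that K_H(λ, a, μ, R) = h + conj(g) is a normalized sense-preserving harmonic mapping on 𝔻. -/
open Complex Set

noncomputable section

open scoped NNReal ENNReal Real
set_option maxHeartbeats 1000000

lemma re_w_pos {z : ℂ} (hz : ‖z‖ < 1) : 0 < ((1 + z) / (1 - z)).re := by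
  have hz1 : (1:ℂ) - z ≠ 0 := by
    intro h
    have : z = 1 := by linear_combination -h
    rw [this] at hz; simp at hz
  have hsq : Complex.normSq z < 1 := by
    have h := Complex.sq_norm z
    nlinarith [norm_nonneg z]
  have hpos : 0 < Complex.normSq (1 - z) := Complex.normSq_pos.mpr hz1
  rw [Complex.div_re, ← add_div]
  have hnum : (1+z).re * (1-z).re + (1+z).im * (1-z).im = 1 - Complex.normSq z := by
    simp [Complex.normSq_apply, Complex.add_re, Complex.sub_re, Complex.add_im, Complex.sub_im]
    ring
  rw [hnum]
  exact div_pos (by linarith) hpos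

lemma w_ne_zero {z : ℂ} (hz : ‖z‖ < 1) : (1 + z) / (1 - z) ≠ 0 := by
  intro h
  have := re_w_pos hz
  rw [h] at this; simp at this

lemma w_mem_slitPlane {z : ℂ} (hz : ‖z‖ < 1) : (1 + z) / (1 - z) ∈ slitPlane :=
  Or.inl (re_w_pos hz)

lemma one_sub_ne {z : ℂ} (hz : ‖z‖ < 1) : (1:ℂ) - z ≠ 0 := by
  intro h
  have : z = 1 := by linear_combination -h
  rw [this] at hz; simp at hz

lemma w_hasDerivAt {z : ℂ} (hz : ‖z‖ < 1) :
    HasDerivAt (fun y : ℂ => (1 + y) / (1 - y)) (2 / (1 - z) ^ 2) z := by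
  have h1 : HasDerivAt (fun y : ℂ => 1 + y) 1 z := (hasDerivAt_id z).const_add 1
  have h2 : HasDerivAt (fun y : ℂ => 1 - y) (-1) z := (hasDerivAt_id z).const_sub 1
  have := h1.div h2 (one_sub_ne hz)
  exact this.congr_deriv (by ring)

lemma re_cpow_pos {w : ℂ} (hw : 0 < w.re) {R : ℝ} (hR0 : 0 ≤ R) (hR1 : R ≤ 1) :
    0 < (w ^ (R:ℂ)).re := by
  have hw0 : w ≠ 0 := by intro h; rw [h] at hw; simp at hw
  rw [Complex.cpow_def_of_ne_zero hw0, Complex.exp_re]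
  apply mul_pos (Real.exp_pos _)
  have him : (Complex.log w * (R:ℂ)).im = R * Complex.arg w := by
    simp [Complex.mul_im, Complex.log_im]
    ring
  rw [him]
  have harg : |Complex.arg w| < π/2 := Complex.abs_arg_lt_pi_div_two_iff.mpr (Or.inl hw)
  have habs : |R * Complex.arg w| < π/2 := by
    rw [abs_mul, _root_.abs_of_nonneg hR0]
    calc R * |Complex.arg w| ≤ 1 * |Complex.arg w| :=
          mul_le_mul_of_nonneg_right hR1 (abs_nonneg _)
      _ = |Complex.arg w| := one_mul _
      _ < π/2 := harg
  rw [abs_lt] at habs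
  exact Real.cos_pos_of_mem_Ioo ⟨by linarith [habs.1], habs.2⟩

lemma koebe_zero (a : ℂ) : koebeFn a 0 = 0 := by
  unfold koebeFn
  split <;> norm_num

lemma koebe_hasDerivAt_s13 (a : ℂ) {z : ℂ} (hz : ‖z‖ < 1) :
    HasDerivAt (koebeFn a) (((1 + z) / (1 - z)) ^ (a - 1) / (1 - z) ^ 2) z := by
  have hz1 := one_sub_ne hz
  have hw := w_hasDerivAt hz
  have hsp := w_mem_slitPlane hz
  have hw0 := w_ne_zero hz
  by_cases ha : a = 0
  · subst ha
    have hlog : HasDerivAt (fun y : ℂ => Complex.log ((1 + y) / (1 - y)))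
        ((2 / (1 - z) ^ 2) / ((1 + z) / (1 - z))) z := hw.clog hsp
    have h2 : HasDerivAt (koebeFn 0)
        ((1/2 : ℂ) * ((2 / (1 - z) ^ 2) / ((1 + z) / (1 - z)))) z := by
      have := hlog.const_mul (1/2 : ℂ)
      exact this.congr_of_eventuallyEq (Filter.Eventually.of_forall fun y => by simp [koebeFn])
    convert h2 using 1
    rw [zero_sub, Complex.cpow_neg_one]
    field_simp
  · have hcp : HasDerivAt (fun y : ℂ => ((1 + y) / (1 - y)) ^ a)
        (a * ((1 + z) / (1 - z)) ^ (a - 1) * (2 / (1 - z) ^ 2)) z := hw.cpow_const hsp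
    have h2 : HasDerivAt (koebeFn a)
        ((1 / (2 * a)) * (a * ((1 + z) / (1 - z)) ^ (a - 1) * (2 / (1 - z) ^ 2))) z := by
      have := (hcp.sub_const 1).const_mul (1 / (2 * a))
      exact this.congr_of_eventuallyEq (Filter.Eventually.of_forall fun y => by simp [koebeFn, ha])
    convert h2 using 1
    field_simp

lemma lens_zero (R : ℝ) : lensMap R 0 = 0 := by
  simp [lensMap]

lemma lens_abs_lt {R : ℝ} (hR0 : 0 ≤ R) (hR1 : R ≤ 1) {z : ℂ} (hz : ‖z‖ < 1) :
    ‖lensMap R z‖ < 1 := by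
  set A : ℂ := ((1 + z) / (1 - z)) ^ (R:ℂ) with hA
  have hre : 0 < A.re := re_cpow_pos (re_w_pos hz) hR0 hR1
  have hne : A + 1 ≠ 0 := by
    intro h
    have : (A + 1).re = 0 := by rw [h]; simp
    simp only [Complex.add_re, Complex.one_re] at this
    linarith
  have hlt : Complex.normSq (A - 1) < Complex.normSq (A + 1) := by
    simp only [Complex.normSq_apply, Complex.sub_re, Complex.sub_im, Complex.add_re,
      Complex.add_im, Complex.one_re, Complex.one_im]
    nlinarith
  have habs : ‖A - 1‖ < ‖A + 1‖ := by
    rw [Complex.norm_def, Complex.norm_def]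
    exact Real.sqrt_lt_sqrt (Complex.normSq_nonneg _) hlt
  have hpos : 0 < ‖A + 1‖ := by
    simpa [norm_pos_iff] using hne
  rw [lensMap, ← hA, norm_div, div_lt_one hpos]
  exact habs

lemma lens_hasDerivAt {R : ℝ} (hR0 : 0 ≤ R) (hR1 : R ≤ 1) {z : ℂ} (hz : ‖z‖ < 1) :
    DifferentiableAt ℂ (lensMap R) z := by
  have hw := w_hasDerivAt hz
  have hsp := w_mem_slitPlane hz
  have hA : HasDerivAt (fun y : ℂ => ((1 + y) / (1 - y)) ^ (R:ℂ))
      ((R:ℂ) * ((1 + z) / (1 - z)) ^ ((R:ℂ) - 1) * (2 / (1 - z) ^ 2)) z := hw.cpow_const hsp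
  have hre : 0 < (((1 + z) / (1 - z)) ^ (R:ℂ)).re := re_cpow_pos (re_w_pos hz) hR0 hR1
  have hne : ((1 + z) / (1 - z)) ^ (R:ℂ) + 1 ≠ 0 := by
    intro h
    have : (((1 + z) / (1 - z)) ^ (R:ℂ) + 1).re = 0 := by rw [h]; simp
    simp only [Complex.add_re, Complex.one_re] at this
    linarith
  exact ((hA.differentiableAt.sub_const 1).div (hA.differentiableAt.add_const 1) hne)

open Metric in
theorem exists_primitive_ball {F : ℂ → ℂ} (hF : DifferentiableOn ℂ F (Metric.ball (0:ℂ) 1)) :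
    ∃ G : ℂ → ℂ, G 0 = 0 ∧ ∀ z ∈ Metric.ball (0:ℂ) 1, HasDerivAt G (F z) z := by
  have hsub : ∀ r : ℝ, r < 1 → closedBall (0:ℂ) r ⊆ ball 0 1 := by
    intro r hr x hx
    simp only [Metric.mem_closedBall, Metric.mem_ball] at *
    linarith
  have hhalf : HasFPowerSeriesOnBall F (cauchyPowerSeries F 0 (1/2 : ℝ≥0)) 0 (1/2 : ℝ≥0) :=
    (hF.mono (by exact_mod_cast hsub (1/2) (by norm_num))).hasFPowerSeriesOnBall (by norm_num)
  set p := cauchyPowerSeries F 0 (1/2 : ℝ≥0) with hp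
  set c : ℕ → ℂ := fun n => p.coeff n with hc
  refine ⟨fun z => ∑' n, c n / (n + 1) * z ^ (n + 1), by simp, ?_⟩
  intro z hz
  simp only [mem_ball, dist_zero_right] at hz
  have hmax1 : max (‖z‖) (1/2) < 1 := max_lt hz (by norm_num)
  set ρ : ℝ := (max (‖z‖) (1/2) + 1) / 2 with hρ
  have hzρ : (‖z‖) < ρ := by
    have := le_max_left (‖z‖) (1/2); dsimp [ρ]; linarith
  have hρhalf : (1/2 : ℝ) < ρ := by
    have := le_max_right (‖z‖) (1/2); dsimp [ρ]; linarith
  have hρ1 : ρ < 1 := by dsimp [ρ]; linarith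
  have hρ0 : (0:ℝ) < ρ := by linarith
  set ρn : ℝ≥0 := ⟨ρ, hρ0.le⟩ with hρn
  have hq : HasFPowerSeriesOnBall F (cauchyPowerSeries F 0 ρn) 0 ρn :=
    (hF.mono (hsub ρ hρ1)).hasFPowerSeriesOnBall (by exact_mod_cast hρ0)
  have hpq : p = cauchyPowerSeries F 0 ρn :=
    hhalf.hasFPowerSeriesAt.eq_formalMultilinearSeries hq.hasFPowerSeriesAt
  rw [← hpq] at hq
  set s : ℝ := ((‖z‖) + ρ) / 2 with hs
  have hzs : (‖z‖) < s := by dsimp [s]; linarith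
  have hs0 : (0:ℝ) ≤ s := le_trans (norm_nonneg z) hzs.le
  have hsρ : s < ρ := by dsimp [s]; linarith
  set sn : ℝ≥0 := ⟨s, hs0⟩ with hsn
  have hsum : Summable fun n => ‖p n‖ * (sn : ℝ) ^ n := by
    have hlt : (sn : ℝ≥0∞) < p.radius := by
      refine lt_of_lt_of_le ?_ hq.r_le
      exact_mod_cast hsρ
    exact p.summable_norm_mul_pow hlt
  have key : HasDerivAt (fun y => ∑' n, c n / (n + 1) * y ^ (n + 1))
      (∑' n, c n * z ^ n) z := by
    refine hasDerivAt_tsum_of_isPreconnected hsum isOpen_ball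
      (convex_ball (0:ℂ) s).isPreconnected
      (y₀ := 0) (g := fun n y => c n / (n + 1) * y ^ (n + 1))
      (g' := fun n y => c n * y ^ n)
      (fun n y _ => ?_) (fun n y hy => ?_) ?_ ?_ ?_
    · have h1 : HasDerivAt (fun y : ℂ => c n / (n + 1) * y ^ (n + 1))
          (c n / (n + 1) * ((n + 1 : ℕ) * y ^ n)) y :=
        (hasDerivAt_pow (n+1) y).const_mul _
      have hne : ((n:ℂ) + 1) ≠ 0 := Nat.cast_add_one_ne_zero n
      exact h1.congr_deriv (by push_cast; rw [← mul_assoc, div_mul_cancel₀ _ hne])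
    · simp only [mem_ball, dist_zero_right] at hy
      rw [norm_mul, norm_pow]
      have h1 : ‖c n‖ = ‖p n‖ :=
        (FormalMultilinearSeries.norm_apply_eq_norm_coef (p := p) (n := n)).symm
      show ‖c n‖ * ‖y‖ ^ n ≤ ‖p n‖ * s ^ n
      rw [h1]; gcongr
    · exact mem_ball_self (by dsimp [s]; linarith [norm_nonneg z])
    · refine Summable.congr summable_zero fun n => ?_
      simp [pow_succ]
    · simpa [mem_ball, dist_zero_right] using hzs
  have hFz : F z = ∑' n, c n * z ^ n := by
    have hzmem : z ∈ Metric.eball (0:ℂ) ρn := by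
      simp only [Metric.mem_eball, edist_zero_right, enorm_eq_nnnorm]
      exact_mod_cast hzρ
    have := hq.hasSum_sub (by simpa using hzmem)
    rw [sub_zero] at this
    have heq : (fun n => p n fun _ => z) = fun n => c n * z ^ n := by
      funext n
      rw [p.apply_eq_pow_smul_coeff]
      simp [hc, mul_comm]
    rw [heq] at this
    exact this.tsum_eq.symm
  rw [hFz]
  exact key

def KdFn (a : ℂ) (z : ℂ) : ℂ := ((1 + z) / (1 - z)) ^ (a - 1) / (1 - z) ^ 2

lemma Kd_ne_zero (a : ℂ) {z : ℂ} (hz : ‖z‖ < 1) : KdFn a z ≠ 0 := by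
  apply div_ne_zero
  · rw [Ne, Complex.cpow_eq_zero_iff]
    push_neg
    intro h
    exact absurd h (w_ne_zero hz)
  · exact pow_ne_zero 2 (one_sub_ne hz)

lemma Kd_at_zero (a : ℂ) : KdFn a 0 = 1 := by
  simp [KdFn]

lemma Kd_hasDerivAtFn (a : ℂ) {z : ℂ} (hz : ‖z‖ < 1) :
    DifferentiableAt ℂ (KdFn a) z := by
  have hA : HasDerivAt (fun y : ℂ => ((1 + y) / (1 - y)) ^ (a - 1))
      ((a-1) * ((1 + z) / (1 - z)) ^ (a - 1 - 1) * (2 / (1 - z) ^ 2)) z :=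
    (w_hasDerivAt hz).cpow_const (w_mem_slitPlane hz)
  have hB : DifferentiableAt ℂ (fun y : ℂ => (1 - y) ^ 2) z :=
    ((differentiable_const (1:ℂ)).sub differentiable_id).differentiableAt.pow 2
  exact (hA.differentiableAt.div hB (pow_ne_zero 2 (one_sub_ne hz)))

lemma den_ne_zero {lam mu : ℂ} (hlam : ‖lam‖ = 1) (hmu : ‖mu‖ = 1)
    {R : ℝ} (hR0 : 0 ≤ R) (hR1 : R ≤ 1) {z : ℂ} (hz : ‖z‖ < 1) :
    1 - lam * mu * lensMap R z ≠ 0 := by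
  intro h0
  have h1 : lam * mu * lensMap R z = 1 := by linear_combination -h0
  have h2 := congrArg (‖·‖) h1
  rw [norm_mul, norm_mul, hlam, hmu, norm_one, one_mul, one_mul] at h2
  exact absurd h2 (ne_of_lt (lens_abs_lt hR0 hR1 hz))

def shearF (lam mu a : ℂ) (R : ℝ) (z : ℂ) : ℂ :=
  mu * lensMap R z * KdFn a z / (1 - lam * mu * lensMap R z)

lemma shearF_diffOn (lam mu a : ℂ) (hlam : ‖lam‖ = 1) (hmu : ‖mu‖ = 1)
    {R : ℝ} (hR0 : 0 ≤ R) (hR1 : R ≤ 1) :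
    DifferentiableOn ℂ (shearF lam mu a R) (Metric.ball (0:ℂ) 1) := by
  intro z hz
  rw [Metric.mem_ball, Complex.dist_eq, sub_zero] at hz
  have hl := lens_hasDerivAt hR0 hR1 hz
  have hK := Kd_hasDerivAtFn a hz
  have hden : DifferentiableAt ℂ (fun y => 1 - lam * mu * lensMap R y) z :=
    (differentiable_const (1:ℂ)).differentiableAt.sub ((hl.const_mul _))
  exact ((((hl.const_mul mu).mul hK).div hden
    (den_ne_zero hlam hmu hR0 hR1 hz))).differentiableWithinAt


/-- For all unimodular `λ, μ`, every `a ∈ ℂ` and every `0 ≤ R ≤ 1`, the shear system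
`h - λg = k_a`, `g' = μ·l_R·h'`, `h(0) = g(0) = 0` has a unique pair of analytic
solutions `(h, g)` on the unit disk; moreover `h'(0) = 1`, `h'` is nonvanishing and
`|g'| < |h'|` on the disk, so `K_H(λ, a, μ, R) = h + conj g` is a normalized
sense-preserving harmonic mapping. -/
theorem generalized_harmonic_koebe_exists_unique
    (lam mu : ℂ) (hlam : ‖lam‖ = 1) (hmu : ‖mu‖ = 1)
    (a : ℂ) (R : ℝ) (hR0 : 0 ≤ R) (hR1 : R ≤ 1) :
    ∃ h g : ℂ → ℂ,
      (DifferentiableOn ℂ h unitDisk ∧ DifferentiableOn ℂ g unitDisk ∧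
        h 0 = 0 ∧ g 0 = 0 ∧
        (∀ z ∈ unitDisk, h z - lam * g z = koebeFn a z) ∧
        (∀ z ∈ unitDisk, deriv g z = mu * lensMap R z * deriv h z) ∧
        IsNormalizedSPH h g) ∧
      ∀ h' g' : ℂ → ℂ,
        DifferentiableOn ℂ h' unitDisk → DifferentiableOn ℂ g' unitDisk →
        h' 0 = 0 → g' 0 = 0 →
        (∀ z ∈ unitDisk, h' z - lam * g' z = koebeFn a z) →
        (∀ z ∈ unitDisk, deriv g' z = mu * lensMap R z * deriv h' z) →
        Set.EqOn h h' unitDisk ∧ Set.EqOn g g' unitDisk := by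
  have hball : unitDisk = Metric.ball (0:ℂ) 1 := by
    ext z; simp [unitDisk, Metric.mem_ball, Complex.dist_eq]
  have hopen : IsOpen unitDisk := hball ▸ Metric.isOpen_ball
  have hconv : Convex ℝ unitDisk := hball ▸ convex_ball (0:ℂ) 1
  have h0mem : (0:ℂ) ∈ unitDisk := by simp [unitDisk]
  obtain ⟨g, hg0, hgd⟩ := exists_primitive_ball (shearF_diffOn lam mu a hlam hmu hR0 hR1)
  have hgd' : ∀ z ∈ unitDisk, HasDerivAt g (shearF lam mu a R z) z := by
    intro z hz; exact hgd z (hball ▸ hz)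
  set h : ℂ → ℂ := fun z => koebeFn a z + lam * g z with hh
  -- basic facts at each point of the disk
  have habs : ∀ z ∈ unitDisk, ‖z‖ < 1 := fun z hz => hz
  have hhd : ∀ z ∈ unitDisk,
      HasDerivAt h (KdFn a z + lam * shearF lam mu a R z) z := by
    intro z hz
    exact (koebe_hasDerivAt_s13 a (habs z hz)).add ((hgd' z hz).const_mul lam)
  have hcomb : ∀ z ∈ unitDisk, KdFn a z + lam * shearF lam mu a R z
      = KdFn a z / (1 - lam * mu * lensMap R z) := by
    intro z hz
    have hden := den_ne_zero hlam hmu hR0 hR1 (habs z hz)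
    unfold shearF
    field_simp
    ring
  have hderivh : ∀ z ∈ unitDisk, deriv h z = KdFn a z / (1 - lam * mu * lensMap R z) := by
    intro z hz
    rw [(hhd z hz).deriv, hcomb z hz]
  have hderivg : ∀ z ∈ unitDisk, deriv g z = shearF lam mu a R z := by
    intro z hz; exact (hgd' z hz).deriv
  have hshear_eq : ∀ z ∈ unitDisk,
      shearF lam mu a R z = mu * lensMap R z * (KdFn a z / (1 - lam * mu * lensMap R z)) := by
    intro z hz
    unfold shearF
    rw [mul_div_assoc]
  have hderivh_ne : ∀ z ∈ unitDisk, deriv h z ≠ 0 := by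
    intro z hz
    rw [hderivh z hz]
    exact div_ne_zero (Kd_ne_zero a (habs z hz)) (den_ne_zero hlam hmu hR0 hR1 (habs z hz))
  have hgdiffOn : DifferentiableOn ℂ g unitDisk := fun z hz =>
    (hgd' z hz).differentiableAt.differentiableWithinAt
  have hhdiffOn : DifferentiableOn ℂ h unitDisk := fun z hz =>
    (hhd z hz).differentiableAt.differentiableWithinAt
  have hh0 : h 0 = 0 := by simp [hh, koebe_zero, hg0]
  have hderivh0 : deriv h 0 = 1 := by
    rw [hderivh 0 h0mem, Kd_at_zero, lens_zero]
    simp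
  have hderiv_rel : ∀ z ∈ unitDisk, deriv g z = mu * lensMap R z * deriv h z := by
    intro z hz
    rw [hderivg z hz, hderivh z hz, hshear_eq z hz]
  have hsense : ∀ z ∈ unitDisk, ‖deriv g z‖ < ‖deriv h z‖ := by
    intro z hz
    rw [hderiv_rel z hz, norm_mul, norm_mul, hmu, one_mul]
    have h1 : 0 < ‖deriv h z‖ := by
      simpa [norm_pos_iff] using hderivh_ne z hz
    calc ‖lensMap R z‖ * ‖deriv h z‖
        < 1 * ‖deriv h z‖ := by
          exact mul_lt_mul_of_pos_right (lens_abs_lt hR0 hR1 (habs z hz)) h1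
      _ = ‖deriv h z‖ := one_mul _
  refine ⟨h, g, ⟨hhdiffOn, hgdiffOn, hh0, hg0, ?_, hderiv_rel,
    ⟨hhdiffOn, hgdiffOn, hh0, hg0, hderivh0, hderivh_ne, hsense⟩⟩, ?_⟩
  · intro z _
    show koebeFn a z + lam * g z - lam * g z = koebeFn a z
    ring
  · -- uniqueness
    intro h1 g1 hh1 hg1 hh10 hg10 heq1 hrel1
    have hg1deriv : ∀ x ∈ unitDisk, deriv g1 x = shearF lam mu a R x := by
      intro x hx
      have hx' := habs x hx
      have hg1x : DifferentiableAt ℂ g1 x := hg1.differentiableAt (hopen.mem_nhds hx)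
      have heqf : h1 =ᶠ[nhds x] fun y => koebeFn a y + lam * g1 y := by
        filter_upwards [hopen.mem_nhds hx] with y hy
        have := heq1 y hy
        linear_combination this
      have hd1 : HasDerivAt h1 (KdFn a x + lam * deriv g1 x) x :=
        (((koebe_hasDerivAt_s13 a hx').add ((hg1x.hasDerivAt).const_mul lam))).congr_of_eventuallyEq
          heqf
      have hE : deriv g1 x = mu * lensMap R x * deriv h1 x := hrel1 x hx
      rw [hd1.deriv] at hE
      have hden := den_ne_zero hlam hmu hR0 hR1 hx'
      unfold shearF
      rw [eq_div_iff hden]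
      linear_combination hE
    have hgEq : Set.EqOn g g1 unitDisk := by
      intro x hx
      have hconst : g x - g1 x = g 0 - g1 0 := by
        refine hconv.is_const_of_fderivWithin_eq_zero
          (hgdiffOn.sub hg1) ?_ hx h0mem
        intro y hy
        have hg1y : DifferentiableAt ℂ g1 y := hg1.differentiableAt (hopen.mem_nhds hy)
        have hzero : HasDerivAt (fun w => g w - g1 w) 0 y := by
          have := (hgd' y hy).sub hg1y.hasDerivAt
          rw [hg1deriv y hy] at this
          rwa [sub_self] at this
        rw [fderivWithin_of_isOpen hopen hy, show g - g1 = fun w => g w - g1 w from rfl,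
          hzero.hasFDerivAt.fderiv]
        ext
        simp
      rw [hg0, hg10, sub_zero] at hconst
      exact sub_eq_zero.mp hconst
    refine ⟨?_, hgEq⟩
    intro x hx
    have := heq1 x hx
    have hgx := hgEq hx
    show koebeFn a x + lam * g x = h1 x
    linear_combination -this + lam * hgx
end
end

section
/- Let a ∈ ℝ and 0 ≤ R ≤ 1 with α := a + R > 0, and let K_{a,R} = h + conj(g) be the generalized harmonic Koebe function. Then for every r ∈ [0, 1), |h'(−r)| − |g'(−r)| = (1−r)^{α−1}/(1+r)^{α+1}; that is, K_{a,R} attains equality in the distortion lower bound for affine and linear invariant families of order α along the negative real axis. -/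
open Complex Set

noncomputable section

private lemma hasDerivAt_koebe (a : ℂ) (z : ℂ) (hz : (1:ℂ) - z ≠ 0)
    (hmem : (1 + z) / (1 - z) ∈ Complex.slitPlane) :
    HasDerivAt (koebeFn a) (((1 + z) / (1 - z)) ^ (a - 1) / (1 - z) ^ 2) z := by
  have h1 : HasDerivAt (fun w : ℂ => 1 + w) 1 z := by
    simpa using (hasDerivAt_id z).const_add 1
  have h2 : HasDerivAt (fun w : ℂ => 1 - w) (-1) z := by
    simpa using HasDerivAt.const_sub 1 (hasDerivAt_id z)
  have hu : HasDerivAt (fun w : ℂ => (1 + w) / (1 - w)) (2 / (1 - z) ^ 2) z := by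
    have := h1.div h2 hz
    refine this.congr_deriv ?_
    ring
  have hu0 : (1 + z) / (1 - z) ≠ 0 := Complex.slitPlane_ne_zero hmem
  rcases eq_or_ne a 0 with rfl | ha
  · have hk : koebeFn 0 = fun w => (1 / 2 : ℂ) * Complex.log ((1 + w) / (1 - w)) := by
      funext w; simp [koebeFn]
    rw [hk]
    have hlog := (Complex.hasDerivAt_log hmem).comp z hu
    have := hlog.const_mul (1 / 2 : ℂ)
    refine this.congr_deriv ?_
    rw [zero_sub, Complex.cpow_neg_one]
    field_simp
  · have hk : koebeFn a = fun w => (1 / (2 * a)) * (((1 + w) / (1 - w)) ^ a - 1) := by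
      funext w; simp [koebeFn, ha]
    rw [hk]
    have hcp := ((hu.cpow_const hmem : HasDerivAt (fun w : ℂ => ((1 + w) / (1 - w)) ^ a) _ z)).sub_const 1
    have := hcp.const_mul (1 / (2 * a))
    refine this.congr_deriv ?_
    field_simp

/-- For real `a` and `0 ≤ R ≤ 1` with `α := a + R > 0`, the generalized harmonic Koebe
function `K_{a,R} = h + conj g` (defined by `h - g = k_a`, `g' = l_R·h'`,
`h(0) = g(0) = 0`) attains equality in the distortion lower bound along the negative
real axis: `|h'(-r)| - |g'(-r)| = (1-r)^(α-1)/(1+r)^(α+1)` for `0 ≤ r < 1`. -/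
theorem generalized_harmonic_koebe_distortion_lower_equality
    (a R : ℝ) (hR0 : 0 ≤ R) (hR1 : R ≤ 1) (hα : 0 < a + R)
    (h g : ℂ → ℂ)
    (hh : DifferentiableOn ℂ h unitDisk) (hg : DifferentiableOn ℂ g unitDisk)
    (h0 : h 0 = 0) (g0 : g 0 = 0)
    (hshear : ∀ z ∈ unitDisk, h z - g z = koebeFn (a : ℂ) z)
    (hdil : ∀ z ∈ unitDisk, deriv g z = lensMap R z * deriv h z) :
    ∀ r : ℝ, 0 ≤ r → r < 1 →
      ‖deriv h (-(r : ℂ))‖ - ‖deriv g (-(r : ℂ))‖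
        = (1 - r) ^ (a + R - 1) / (1 + r) ^ (a + R + 1) := by
  intro r hr0 hr1
  set z : ℂ := -(r : ℂ) with hzdef
  have hp : (0:ℝ) < 1 - r := by linarith
  have hq : (0:ℝ) < 1 + r := by linarith
  have hzU : z ∈ unitDisk := by
    simp only [unitDisk, mem_setOf_eq, hzdef, norm_neg, Complex.norm_real, Real.norm_eq_abs,
      _root_.abs_of_nonneg hr0]
    exact hr1
  have h1z : (1:ℂ) + z = ((1 - r : ℝ) : ℂ) := by push_cast [hzdef]; ring
  have h2z : (1:ℂ) - z = ((1 + r : ℝ) : ℂ) := by push_cast [hzdef]; ring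
  set t : ℝ := (1 - r) / (1 + r) with htdef
  have ht0 : 0 < t := div_pos hp hq
  have ht1 : t ≤ 1 := by
    rw [htdef, div_le_one hq]; linarith
  have hu : (1 + z) / (1 - z) = ((t : ℝ) : ℂ) := by
    rw [h1z, h2z, htdef]; push_cast; ring
  have hmem : (1 + z) / (1 - z) ∈ Complex.slitPlane := by
    rw [hu]; exact Complex.ofReal_mem_slitPlane.mpr ht0
  have hz1 : (1:ℂ) - z ≠ 0 := by
    rw [h2z]; exact_mod_cast hq.ne'
  set d : ℝ := t ^ (a - 1) / (1 + r) ^ 2 with hddef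
  have hd0 : 0 < d := div_pos (Real.rpow_pos_of_pos ht0 _) (by positivity)
  have hD : ((1 + z) / (1 - z)) ^ ((a:ℂ) - 1) / (1 - z) ^ 2 = ((d : ℝ) : ℂ) := by
    rw [hu, h2z, show ((a:ℂ) - 1) = ((a - 1 : ℝ) : ℂ) by push_cast; ring,
      ← Complex.ofReal_cpow ht0.le, ← Complex.ofReal_pow, ← Complex.ofReal_div]
  set s : ℝ := t ^ R with hsdef
  have hs0 : 0 < s := Real.rpow_pos_of_pos ht0 _
  have hs1 : s ≤ 1 := Real.rpow_le_one ht0.le ht1 hR0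
  have hsne : s + 1 ≠ 0 := by positivity
  have hl : lensMap R z = (((s - 1) / (s + 1) : ℝ) : ℂ) := by
    unfold lensMap
    rw [hu, ← Complex.ofReal_cpow ht0.le R, ← hsdef]
    push_cast
    ring
  have hopen : IsOpen unitDisk := isOpen_lt continuous_norm continuous_const
  have hnhds : unitDisk ∈ nhds z := hopen.mem_nhds hzU
  have hhd : DifferentiableAt ℂ h z := (hh z hzU).differentiableAt hnhds
  have hgd : DifferentiableAt ℂ g z := (hg z hzU).differentiableAt hnhds
  have hDk := hasDerivAt_koebe (a : ℂ) z hz1 hmem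
  have heq : deriv h z - deriv g z = ((d : ℝ) : ℂ) := by
    have e : deriv (fun w => h w - g w) z = deriv (koebeFn (a:ℂ)) z := by
      apply Filter.EventuallyEq.deriv_eq
      filter_upwards [hnhds] with w hw using hshear w hw
    rw [deriv_fun_sub hhd hgd, hDk.deriv, hD] at e
    exact e
  set H : ℂ := deriv h z with hHdef
  have hgH : deriv g z = (((s - 1) / (s + 1) : ℝ) : ℂ) * H := by
    rw [← hl]; exact hdil z hzU
  have lC2 : (1:ℂ) - (((s - 1) / (s + 1) : ℝ) : ℂ) = ((2 / (s + 1) : ℝ) : ℂ) := by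
    norm_cast
    field_simp
    ring
  have e3 : H * ((2 / (s + 1) : ℝ) : ℂ) = ((d : ℝ) : ℂ) := by
    rw [← lC2]
    rw [hgH] at heq
    linear_combination heq
  have hcne : (((2 / (s + 1) : ℝ)) : ℂ) ≠ 0 := by
    rw [Complex.ofReal_ne_zero]
    positivity
  have hH : H = ((d * (s + 1) / 2 : ℝ) : ℂ) := by
    have := eq_div_of_mul_eq hcne e3
    rw [this]
    push_cast
    field_simp
  have hG : deriv g z = ((d * (s - 1) / 2 : ℝ) : ℂ) := by
    rw [hgH, hH, ← Complex.ofReal_mul]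
    congr 1
    field_simp
  rw [hH, hG, Complex.norm_real, Complex.norm_real, Real.norm_eq_abs, Real.norm_eq_abs,
    _root_.abs_of_nonneg (by positivity : (0:ℝ) ≤ d * (s + 1) / 2),
    _root_.abs_of_nonpos (by nlinarith : d * (s - 1) / 2 ≤ 0)]
  have key : d * (s + 1) / 2 - -(d * (s - 1) / 2) = d * s := by ring
  rw [key, hddef, hsdef, ← Real.rpow_natCast (1 + r) 2, htdef,
    Real.div_rpow hp.le hq.le, Real.div_rpow hp.le hq.le]
  rw [div_div, div_mul_div_comm, ← Real.rpow_add hp, ← Real.rpow_add hq,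
    ← Real.rpow_add hq]
  norm_num
  ring_nf
end
end
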